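/- arXiv:1109.5345 — 8 statements merged into one kernel-verified Lean document; each statement's English description precedes it below -/
import Mathlib

section
/- Let G be a group, n a natural number, and P the free product of n copies of G. For all pairwise distinct i j k : Fin n and all g h : G, the partial conjugations φ(i,j,g) and φ(i,k,h) commute: φ(i,j,g) ∘ φ(i,k,h) = φ(i,k,h) ∘ φ(i,j,g) as monoid homomorphisms P →* P. -/
/-- `φ : P →* P` is the partial conjugation of the free product
`P = Monoid.CoprodI (fun _ : Fin n => G)` associated to `i j : Fin n` and `g : G`:
it sends `ι j x` to `(ι i g) * (ι j x) * (ι i g)⁻¹` and fixes `ι k x` for `k ≠ j`. -/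
def IsPartialConj {n : ℕ} {G : Type*} [Group G] (i j : Fin n) (g : G)
    (φ : Monoid.CoprodI (fun _ : Fin n => G) →* Monoid.CoprodI (fun _ : Fin n => G)) : Prop :=
  (∀ x : G, φ (Monoid.CoprodI.of (i := j) x) =
      Monoid.CoprodI.of (i := i) g * Monoid.CoprodI.of (i := j) x *
        (Monoid.CoprodI.of (i := i) g)⁻¹) ∧
  ∀ k : Fin n, k ≠ j → ∀ x : G,
      φ (Monoid.CoprodI.of (i := k) x) = Monoid.CoprodI.of (i := k) x

/-- For pairwise distinct `i j k` the partial conjugations `φ(i,j,g)` and `φ(i,k,h)`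
commute. -/
theorem partialConj_comm_same_base {n : ℕ} {G : Type*} [Group G] (i j k : Fin n)
    (hij : i ≠ j) (hik : i ≠ k) (hjk : j ≠ k) (g h : G)
    (φ₁ φ₂ : Monoid.CoprodI (fun _ : Fin n => G) →* Monoid.CoprodI (fun _ : Fin n => G))
    (h₁ : IsPartialConj i j g φ₁) (h₂ : IsPartialConj i k h φ₂) :
    φ₁.comp φ₂ = φ₂.comp φ₁ := by
  obtain ⟨h₁j, h₁o⟩ := h₁
  obtain ⟨h₂k, h₂o⟩ := h₂
  apply Monoid.CoprodI.ext_hom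
  intro l
  ext x
  simp only [MonoidHom.comp_apply]
  rcases eq_or_ne l j with rfl | hlj
  · rw [h₂o _ hjk, h₁j, map_mul, map_mul, map_inv, h₂o _ hik, h₂o _ hjk]
  · rcases eq_or_ne l k with rfl | hlk
    · rw [h₁o _ hlj, h₂k, map_mul, map_mul, map_inv, h₁o _ hij, h₁o _ hlj]
    · rw [h₂o _ hlk, h₁o _ hlj, h₂o _ hlk]
end

section
/- Let G be a group, n a natural number, and P the free product of n copies of G. For all pairwise distinct i j k l : Fin n and all g h : G, the partial conjugations φ(i,j,g) and φ(k,l,h) commute: φ(i,j,g) ∘ φ(k,l,h) = φ(k,l,h) ∘ φ(i,j,g) as monoid homomorphisms P →* P. -/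
/-- For pairwise distinct `i j k l` the partial conjugations `φ(i,j,g)` and `φ(k,l,h)`
commute. -/
theorem partialConj_comm_disjoint {n : ℕ} {G : Type*} [Group G] (i j k l : Fin n)
    (hij : i ≠ j) (hik : i ≠ k) (hil : i ≠ l) (hjk : j ≠ k) (hjl : j ≠ l) (hkl : k ≠ l)
    (g h : G)
    (φ₁ φ₂ : Monoid.CoprodI (fun _ : Fin n => G) →* Monoid.CoprodI (fun _ : Fin n => G))
    (h₁ : IsPartialConj i j g φ₁) (h₂ : IsPartialConj k l h φ₂) :
    φ₁.comp φ₂ = φ₂.comp φ₁ := by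
  obtain ⟨h₁j, h₁o⟩ := h₁
  obtain ⟨h₂l, h₂o⟩ := h₂
  apply Monoid.CoprodI.ext_hom
  intro m
  ext x
  simp only [MonoidHom.comp_apply]
  by_cases hm : m = j
  · subst hm
    rw [h₂o m hjl, h₁j, map_mul, map_mul, map_inv, h₂o i hil, h₂o m hjl]
  · by_cases hm' : m = l
    · subst hm'
      rw [h₂l, map_mul, map_mul, map_inv, h₁o k hjk.symm, h₁o m hjl.symm, h₂l]
    · rw [h₂o m hm', h₁o m hm, h₂o m hm']
end

section
/- Let G be a group, n a natural number, and P the free product of n copies of G. For all pairwise distinct i j k : Fin n and all g h : G, the composite partial conjugation φ(i,j,g) ∘ φ(i,k,g) commutes with φ(j,k,h): (φ(i,j,g) ∘ φ(i,k,g)) ∘ φ(j,k,h) = φ(j,k,h) ∘ (φ(i,j,g) ∘ φ(i,k,g)) as monoid homomorphisms P →* P. -/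
/-- For pairwise distinct `i j k` the composite partial conjugation
`φ(i,j,g) ∘ φ(i,k,g)` commutes with `φ(j,k,h)`. -/
theorem partialConj_prod_comm {n : ℕ} {G : Type*} [Group G] (i j k : Fin n)
    (hij : i ≠ j) (hik : i ≠ k) (hjk : j ≠ k) (g h : G)
    (φij φik φjk :
      Monoid.CoprodI (fun _ : Fin n => G) →* Monoid.CoprodI (fun _ : Fin n => G))
    (h₁ : IsPartialConj i j g φij) (h₂ : IsPartialConj i k g φik)
    (h₃ : IsPartialConj j k h φjk) :
    (φij.comp φik).comp φjk = φjk.comp (φij.comp φik) := by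
  obtain ⟨a1, a2⟩ := h₁
  obtain ⟨b1, b2⟩ := h₂
  obtain ⟨c1, c2⟩ := h₃
  apply Monoid.CoprodI.ext_hom
  intro m
  ext x
  simp only [MonoidHom.comp_apply]
  rcases eq_or_ne m k with rfl | hmk
  · simp only [c1, map_mul, map_inv, b1, b2 j hjk, b2 i hik, a1, a2 i hij,
      a2 m (Ne.symm hjk), c2 i hik]
    group
  · rcases eq_or_ne m j with rfl | hmj
    · simp only [c2 m hmk, b2 m hmk, a1, map_mul, map_inv, c2 i hik]
    · simp only [c2 m hmk, b2 m hmk, a2 m hmj]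
end

section
/- Let V be a finite type and let (p, r) be a rooted tree on V, i.e. p : V → V with p r = r and every vertex reaches r under iteration of p. Let j : V be a vertex with p j ≠ r, set i := p j, and define p' := Function.update p j (p i) (remove the edge (i, j) and attach j to the parent of i). Then (p', r) is again a rooted tree on V (p' r = r and every vertex reaches r under iteration of p'), and the set of pairs (v, w) with v a proper ancestor of w with respect to p' is a strict subset of the corresponding set for p; in particular the level of the tree strictly decreases under this reduction. -/
/-- Removing the edge `(i, j)` (where `i = p j` is not the root) and attaching `j` to
the parent of `i` yields again a rooted tree, and the set of proper-ancestor pairs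
strictly decreases; in particular the level of the tree strictly decreases. -/
theorem rootedTree_reduction {V : Type*} [Fintype V] [DecidableEq V] (r : V) (p : V → V)
    (hroot : p r = r) (hreach : ∀ v : V, ∃ k : ℕ, p^[k] v = r)
    (j : V) (hj : p j ≠ r) (p' : V → V) (hp' : p' = Function.update p j (p (p j))) :
    (p' r = r ∧ ∀ v : V, ∃ k : ℕ, p'^[k] v = r) ∧
    {q : V × V | q.1 ≠ q.2 ∧ ∃ k : ℕ, 1 ≤ k ∧ p'^[k] q.2 = q.1} ⊂
      {q : V × V | q.1 ≠ q.2 ∧ ∃ k : ℕ, 1 ≤ k ∧ p^[k] q.2 = q.1} ∧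
    {q : V × V | q.1 ≠ q.2 ∧ ∃ k : ℕ, 1 ≤ k ∧ p'^[k] q.2 = q.1}.ncard <
      {q : V × V | q.1 ≠ q.2 ∧ ∃ k : ℕ, 1 ≤ k ∧ p^[k] q.2 = q.1}.ncard := by
  subst hp'
  have hjr : j ≠ r := fun h => hj (by rw [h, hroot])
  -- iterates of p' are iterates of p with larger index
  have key : ∀ (k : ℕ) (v : V), ∃ m, k ≤ m ∧
      (Function.update p j (p (p j)))^[k] v = p^[m] v := by
    intro k
    induction k with
    | zero => intro v; exact ⟨0, le_refl 0, rfl⟩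
    | succ k ih =>
      intro v
      obtain ⟨m, hm, heq⟩ := ih v
      rw [Function.iterate_succ_apply', heq]
      by_cases h : p^[m] v = j
      · refine ⟨m + 2, by omega, ?_⟩
        rw [h, Function.update_self, Function.iterate_succ_apply',
          Function.iterate_succ_apply', h]
      · exact ⟨m + 1, by omega, by
          rw [Function.update_of_ne h, Function.iterate_succ_apply']⟩
  -- no cycles except at the root
  have nocyc : ∀ v : V, v ≠ r → ∀ t : ℕ, 1 ≤ t → p^[t] v ≠ v := by
    intro v hv t ht hcyc
    obtain ⟨K, hK⟩ := hreach v
    have hmul : ∀ n : ℕ, p^[n * t] v = v := by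
      intro n
      induction n with
      | zero => simp
      | succ n ih => rw [Nat.succ_mul, Function.iterate_add_apply, hcyc, ih]
    have hge : K ≤ K * t := Nat.le_mul_of_pos_right K (by omega)
    have : p^[K * t] v = r := by
      rw [show K * t = (K * t - K) + K from by omega, Function.iterate_add_apply, hK,
        Function.iterate_fixed hroot]
    exact hv (by rw [← hmul K, this])
  refine ⟨⟨Function.update_of_ne (Ne.symm hjr) _ _ ▸ hroot, ?_⟩, ?_, ?_⟩
  · intro v
    obtain ⟨k, hk⟩ := hreach v
    obtain ⟨m, hm, heq⟩ := key k v
    refine ⟨k, ?_⟩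
    rw [heq, show m = (m - k) + k from by omega, Function.iterate_add_apply, hk,
      Function.iterate_fixed hroot]
  · -- strict subset
    have hsub : {q : V × V | q.1 ≠ q.2 ∧ ∃ k : ℕ, 1 ≤ k ∧
        (Function.update p j (p (p j)))^[k] q.2 = q.1} ⊆
        {q : V × V | q.1 ≠ q.2 ∧ ∃ k : ℕ, 1 ≤ k ∧ p^[k] q.2 = q.1} := by
      rintro ⟨v, w⟩ ⟨hne, k, hk, heq⟩
      obtain ⟨m, hm, heq'⟩ := key k w
      exact ⟨hne, m, le_trans hk hm, by rw [← heq', heq]⟩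
    refine ⟨hsub, fun hsub' => ?_⟩
    -- the pair (p j, j) is in the big set but not the small one
    have hpjj : p j ≠ j := by
      intro h
      obtain ⟨k, hk⟩ := hreach j
      rw [Function.iterate_fixed h] at hk
      exact hjr hk
    have hmem : ((p j, j) : V × V) ∈
        {q : V × V | q.1 ≠ q.2 ∧ ∃ k : ℕ, 1 ≤ k ∧ p^[k] q.2 = q.1} :=
      ⟨hpjj, 1, le_refl 1, rfl⟩
    obtain ⟨-, k, hk, heq⟩ := hsub' hmem
    obtain ⟨k', rfl⟩ : ∃ k', k = k' + 1 := ⟨k - 1, by omega⟩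
    rw [Function.iterate_succ_apply, Function.update_self] at heq
    obtain ⟨m, hm, heq'⟩ := key k' (p (p j))
    rw [heq'] at heq
    have : p^[m + 1] (p j) = p j := by
      rw [Function.iterate_succ_apply]; exact heq
    exact nocyc (p j) hj (m + 1) (by omega) this
  · -- ncard
    have hsub : {q : V × V | q.1 ≠ q.2 ∧ ∃ k : ℕ, 1 ≤ k ∧
        (Function.update p j (p (p j)))^[k] q.2 = q.1} ⊂
        {q : V × V | q.1 ≠ q.2 ∧ ∃ k : ℕ, 1 ≤ k ∧ p^[k] q.2 = q.1} := by
      constructor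
      · rintro ⟨v, w⟩ ⟨hne, k, hk, heq⟩
        obtain ⟨m, hm, heq'⟩ := key k w
        exact ⟨hne, m, le_trans hk hm, by rw [← heq', heq]⟩
      · intro hsub'
        have hpjj : p j ≠ j := by
          intro h
          obtain ⟨k, hk⟩ := hreach j
          rw [Function.iterate_fixed h] at hk
          exact hjr hk
        have hmem : ((p j, j) : V × V) ∈
            {q : V × V | q.1 ≠ q.2 ∧ ∃ k : ℕ, 1 ≤ k ∧ p^[k] q.2 = q.1} :=
          ⟨hpjj, 1, le_refl 1, rfl⟩
        obtain ⟨-, k, hk, heq⟩ := hsub' hmem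
        obtain ⟨k', rfl⟩ : ∃ k', k = k' + 1 := ⟨k - 1, by omega⟩
        rw [Function.iterate_succ_apply, Function.update_self] at heq
        obtain ⟨m, hm, heq'⟩ := key k' (p (p j))
        rw [heq'] at heq
        have : p^[m + 1] (p j) = p j := by
          rw [Function.iterate_succ_apply]; exact heq
        exact nocyc (p j) hj (m + 1) (by omega) this
    exact Set.ncard_lt_ncard hsub (Set.toFinite _)
end

section
/- Let V be a finite type, r : V, and Y a type with a distinguished basepoint •. Consider Y-labelled rooted trees T = (p, ℓ) on V with root r, where p : V → V is a rooted-tree parent map and ℓ : V → Y records the label of the edge from p v to v. Define the one-step reduction relation Red by: Red (p, ℓ) (p', ℓ') iff there exists j : V with p j ≠ r and ℓ j = •, and p' = Function.update p j (p (p j)), ℓ' = Function.update ℓ j (ℓ (p j)). Then for every Y-labelled rooted tree T on V with root r there exists a unique N such that T reduces to N by a (possibly empty) finite sequence of Red-steps and N admits no further Red-step; i.e. each Y-labelled tree has a unique irreducible normal form. -/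
namespace LTreeNF

variable {V : Type*} [DecidableEq V] {Y : Type*}

/-- Stopping predicate: the vertex `v` cannot slide further up. -/
def Stp (r : V) (y0 : Y) (T : (V → V) × (V → Y)) (v : V) : Prop :=
  T.2 v ≠ y0 ∨ T.1 v = r

/-- Invariant: root is fixed and every vertex reaches the root. -/
def Inv (r : V) (T : (V → V) × (V → Y)) : Prop :=
  T.1 r = r ∧ ∀ v, ∃ k, T.1^[k] v = r

/-- Number of steps up to the first stopping ancestor. -/
noncomputable def k0 (r : V) (y0 : Y) (T : (V → V) × (V → Y)) (v : V) : ℕ :=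
  sInf {k | Stp r y0 T (T.1^[k] v)}

noncomputable def gnd (r : V) (y0 : Y) (T : (V → V) × (V → Y)) (v : V) : V :=
  T.1^[k0 r y0 T v] v

noncomputable def val (r : V) (y0 : Y) (T : (V → V) × (V → Y)) (v : V) : V × Y :=
  (T.1 (gnd r y0 T v), T.2 (gnd r y0 T v))

/-- The explicit normal form. -/
noncomputable def NF (r : V) (y0 : Y) (T : (V → V) × (V → Y)) : (V → V) × (V → Y) :=
  (fun v => (val r y0 T v).1, fun v => (val r y0 T v).2)

noncomputable def depth (r : V) (T : (V → V) × (V → Y)) (v : V) : ℕ :=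
  sInf {k | T.1^[k] v = r}

/-- One reduction step at vertex `j`. -/
def stepT (T : (V → V) × (V → Y)) (j : V) : (V → V) × (V → Y) :=
  (Function.update T.1 j (T.1 (T.1 j)), Function.update T.2 j (T.2 (T.1 j)))

lemma exStp (r : V) (y0 : Y) (T : (V → V) × (V → Y)) (hT : Inv r T) (v : V) :
    {k | Stp r y0 T (T.1^[k] v)}.Nonempty := by
  obtain ⟨k, hk⟩ := hT.2 v
  cases k with
  | zero =>
    refine ⟨0, Or.inr ?_⟩
    simp only [Function.iterate_zero, id] at hk ⊢
    rw [hk]; exact hT.1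
  | succ n =>
    refine ⟨n, Or.inr ?_⟩
    rw [← Function.iterate_succ_apply' T.1 n v]
    exact hk

lemma stp_gnd (r : V) (y0 : Y) (T : (V → V) × (V → Y)) (hT : Inv r T) (v : V) :
    Stp r y0 T (gnd r y0 T v) :=
  Nat.sInf_mem (exStp r y0 T hT v)

lemma k0_of_stp (r : V) (y0 : Y) (T : (V → V) × (V → Y)) (v : V) (h : Stp r y0 T v) :
    k0 r y0 T v = 0 := by
  apply Nat.sInf_eq_zero.mpr
  left
  simpa using h

lemma val_of_stp (r : V) (y0 : Y) (T : (V → V) × (V → Y)) (v : V) (h : Stp r y0 T v) :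
    val r y0 T v = (T.1 v, T.2 v) := by
  unfold val gnd
  rw [k0_of_stp r y0 T v h]
  simp

lemma k0_succ (r : V) (y0 : Y) (T : (V → V) × (V → Y)) (hT : Inv r T) (v : V)
    (h : ¬ Stp r y0 T v) : k0 r y0 T v = k0 r y0 T (T.1 v) + 1 := by
  have hne : {k | Stp r y0 T (T.1^[k] (T.1 v))}.Nonempty := exStp r y0 T hT (T.1 v)
  have h1 : k0 r y0 T v ≤ k0 r y0 T (T.1 v) + 1 := by
    apply Nat.sInf_le
    show Stp r y0 T (T.1^[k0 r y0 T (T.1 v) + 1] v)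
    rw [Function.iterate_succ_apply]
    exact Nat.sInf_mem hne
  have h2 : Stp r y0 T (T.1^[k0 r y0 T v] v) := Nat.sInf_mem (exStp r y0 T hT v)
  have h3 : k0 r y0 T v ≠ 0 := by
    intro h0
    rw [h0] at h2
    simp only [Function.iterate_zero, id] at h2
    exact h h2
  obtain ⟨m, hm⟩ := Nat.exists_eq_succ_of_ne_zero h3
  have h4 : k0 r y0 T (T.1 v) ≤ m := by
    apply Nat.sInf_le
    show Stp r y0 T (T.1^[m] (T.1 v))
    rw [← Function.iterate_succ_apply, ← hm]
    exact h2
  omega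

lemma gnd_succ (r : V) (y0 : Y) (T : (V → V) × (V → Y)) (hT : Inv r T) (v : V)
    (h : ¬ Stp r y0 T v) : gnd r y0 T v = gnd r y0 T (T.1 v) := by
  unfold gnd
  rw [k0_succ r y0 T hT v h, Function.iterate_succ_apply]

lemma val_succ (r : V) (y0 : Y) (T : (V → V) × (V → Y)) (hT : Inv r T) (v : V)
    (h : ¬ Stp r y0 T v) : val r y0 T v = val r y0 T (T.1 v) := by
  unfold val
  rw [gnd_succ r y0 T hT v h]

lemma notStp_j (r : V) (y0 : Y) (T : (V → V) × (V → Y)) (j : V)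
    (hj1 : T.1 j ≠ r) (hj2 : T.2 j = y0) : ¬ Stp r y0 T j := by
  simp [Stp, hj1, hj2]

lemma chainA (r : V) (T : (V → V) × (V → Y)) (j : V) (hroot : T.1 r = r) (hj1 : T.1 j ≠ r) :
    ∀ k v, T.1^[k] v = r → ∃ m, (stepT T j).1^[m] v = r ∧ m ≤ k ∧ (v = j → m < k) := by
  intro k
  induction k using Nat.strong_induction_on with
  | _ k ih =>
  intro v hv
  rcases Nat.eq_zero_or_pos k with hk0 | hkpos
  · subst hk0
    simp only [Function.iterate_zero, id] at hv
    refine ⟨0, by simpa using hv, le_refl 0, ?_⟩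
    intro hvj
    exact absurd (by rw [← hvj, hv]; exact hroot) hj1
  · by_cases hvj : v = j
    · subst hvj
      have hk2 : 2 ≤ k := by
        by_contra h
        push_neg at h
        interval_cases k
        simp only [Function.iterate_one] at hv
        exact absurd hv hj1
      obtain ⟨m, hm⟩ : ∃ m, k = m + 2 := ⟨k - 2, by omega⟩
      subst hm
      have hv2 : T.1^[m] (T.1 (T.1 v)) = r := by
        rw [Function.iterate_add_apply] at hv
        simpa using hv
      obtain ⟨m', h1, h2, _⟩ := ih m (by omega) (T.1 (T.1 v)) hv2
      refine ⟨m' + 1, ?_, by omega, fun _ => by omega⟩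
      rw [Function.iterate_succ_apply,
        show (stepT T v).1 v = T.1 (T.1 v) from Function.update_self _ _ _]
      exact h1
    · obtain ⟨m, hm⟩ : ∃ m, k = m + 1 := ⟨k - 1, by omega⟩
      subst hm
      rw [Function.iterate_succ_apply] at hv
      obtain ⟨m', h1, h2, _⟩ := ih m (by omega) (T.1 v) hv
      refine ⟨m' + 1, ?_, by omega, fun h => absurd h hvj⟩
      rw [Function.iterate_succ_apply,
        show (stepT T j).1 v = T.1 v from Function.update_of_ne hvj _ _]
      exact h1

lemma inv_step (r : V) {Y : Type*} (y0 : Y) (T : (V → V) × (V → Y)) (j : V)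
    (hT : Inv r T) (hj1 : T.1 j ≠ r) : Inv r (stepT T j) := by
  have hrj : r ≠ j := by
    intro h
    apply hj1
    rw [← h, hT.1]
  constructor
  · show Function.update T.1 j (T.1 (T.1 j)) r = r
    rw [Function.update_of_ne hrj]
    exact hT.1
  · intro v
    obtain ⟨k, hk⟩ := hT.2 v
    obtain ⟨m, h1, _, _⟩ := chainA r T j hT.1 hj1 k v hk
    exact ⟨m, h1⟩

lemma depth_step_le (r : V) (T : (V → V) × (V → Y)) (j : V)
    (hT : Inv r T) (hj1 : T.1 j ≠ r) (v : V) :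
    depth r (stepT T j) v ≤ depth r T v := by
  have h2 : T.1^[depth r T v] v = r := Nat.sInf_mem (hT.2 v)
  obtain ⟨m, h1, hle, _⟩ := chainA r T j hT.1 hj1 _ v h2
  exact le_trans (Nat.sInf_le h1) hle

lemma depth_step_lt (r : V) (T : (V → V) × (V → Y)) (j : V)
    (hT : Inv r T) (hj1 : T.1 j ≠ r) :
    depth r (stepT T j) j < depth r T j := by
  have h2 : T.1^[depth r T j] j = r := Nat.sInf_mem (hT.2 j)
  obtain ⟨m, h1, _, hlt⟩ := chainA r T j hT.1 hj1 _ j h2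
  exact lt_of_le_of_lt (Nat.sInf_le h1) (hlt rfl)

lemma stp_step_iff (r : V) (y0 : Y) (T : (V → V) × (V → Y)) (j : V) (v : V) :
    Stp r y0 (stepT T j) v ↔ Stp r y0 T (if v = j then T.1 j else v) := by
  by_cases hvj : v = j
  · subst hvj
    simp [Stp, stepT, Function.update_self]
  · simp [Stp, stepT, Function.update_of_ne hvj, hvj]

lemma k0_phi_le (r : V) (y0 : Y) (T : (V → V) × (V → Y)) (hT : Inv r T) (j : V)
    (hj1 : T.1 j ≠ r) (hj2 : T.2 j = y0) (u : V) :
    k0 r y0 T (if u = j then T.1 j else u) ≤ k0 r y0 T u := by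
  by_cases h : u = j
  · subst h
    rw [if_pos rfl, k0_succ r y0 T hT u (notStp_j r y0 T u hj1 hj2)]
    omega
  · rw [if_neg h]

lemma val_phi (r : V) (y0 : Y) (T : (V → V) × (V → Y)) (hT : Inv r T) (j : V)
    (hj1 : T.1 j ≠ r) (hj2 : T.2 j = y0) (u : V) :
    val r y0 T (if u = j then T.1 j else u) = val r y0 T u := by
  by_cases h : u = j
  · subst h
    rw [if_pos rfl]
    exact (val_succ r y0 T hT u (notStp_j r y0 T u hj1 hj2)).symm
  · rw [if_neg h]

lemma val_step (r : V) (y0 : Y) (T : (V → V) × (V → Y)) (j : V) (hT : Inv r T)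
    (hj1 : T.1 j ≠ r) (hj2 : T.2 j = y0) :
    ∀ k v, k0 r y0 T (if v = j then T.1 j else v) ≤ k →
      val r y0 (stepT T j) v = val r y0 T (if v = j then T.1 j else v) := by
  have hT' : Inv r (stepT T j) := inv_step r y0 T j hT hj1
  intro k
  induction k using Nat.strong_induction_on with
  | _ k ih =>
  intro v hk
  by_cases hs : Stp r y0 T (if v = j then T.1 j else v)
  · have hs' : Stp r y0 (stepT T j) v := (stp_step_iff r y0 T j v).mpr hs
    rw [val_of_stp _ _ _ _ hs', val_of_stp _ _ _ _ hs]
    by_cases hvj : v = j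
    · subst hvj
      simp [stepT, Function.update_self]
    · simp [stepT, Function.update_of_ne hvj, hvj]
  · have hs' : ¬ Stp r y0 (stepT T j) v := fun h => hs ((stp_step_iff r y0 T j v).mp h)
    have e1 : val r y0 (stepT T j) v = val r y0 (stepT T j) ((stepT T j).1 v) :=
      val_succ r y0 _ hT' v hs'
    have hpv : (stepT T j).1 v = T.1 (if v = j then T.1 j else v) := by
      by_cases hvj : v = j
      · subst hvj
        simp [stepT, Function.update_self]
      · simp [stepT, Function.update_of_ne hvj, hvj]
    have hk1 : k0 r y0 T (if v = j then T.1 j else v)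
        = k0 r y0 T (T.1 (if v = j then T.1 j else v)) + 1 := k0_succ r y0 T hT _ hs
    have hφle : k0 r y0 T (if (stepT T j).1 v = j then T.1 j else (stepT T j).1 v)
        ≤ k0 r y0 T ((stepT T j).1 v) := k0_phi_le r y0 T hT j hj1 hj2 _
    rw [hpv] at hφle
    have e2 := ih (k - 1) (by omega) ((stepT T j).1 v) (by rw [hpv]; omega)
    have e3 : val r y0 T (if (stepT T j).1 v = j then T.1 j else (stepT T j).1 v)
        = val r y0 T ((stepT T j).1 v) := val_phi r y0 T hT j hj1 hj2 _
    have e4 : val r y0 T (T.1 (if v = j then T.1 j else v))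
        = val r y0 T (if v = j then T.1 j else v) := (val_succ r y0 T hT _ hs).symm
    rw [e1, e2, e3, hpv, e4]

lemma NF_step (r : V) (y0 : Y) (T : (V → V) × (V → Y)) (j : V) (hT : Inv r T)
    (hj1 : T.1 j ≠ r) (hj2 : T.2 j = y0) :
    NF r y0 (stepT T j) = NF r y0 T := by
  have h : ∀ v, val r y0 (stepT T j) v = val r y0 T v := fun v =>
    (val_step r y0 T j hT hj1 hj2 (k0 r y0 T (if v = j then T.1 j else v)) v le_rfl).trans
      (val_phi r y0 T hT j hj1 hj2 v)
  refine Prod.ext ?_ ?_ <;> funext v <;> simp only [NF, h v]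

lemma NF_fix (r : V) (y0 : Y) (T : (V → V) × (V → Y)) (h : ∀ v, Stp r y0 T v) :
    NF r y0 T = T := by
  have hv : ∀ v, val r y0 T v = (T.1 v, T.2 v) := fun v => val_of_stp r y0 T v (h v)
  refine Prod.ext ?_ ?_ <;> funext v <;> simp [NF, hv v]

lemma NF_stp (r : V) (y0 : Y) (T : (V → V) × (V → Y)) (hT : Inv r T) (v : V) :
    Stp r y0 (NF r y0 T) v :=
  stp_gnd r y0 T hT v

end LTreeNF

/-- Every `Y`-labelled rooted tree `(p, ℓ)` on a finite vertex set `V` with root `r`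
has a unique irreducible normal form under the one-step reduction relation `Red`,
where `Red (p, ℓ) (p', ℓ')` holds iff there is a vertex `j` whose incoming edge is
labelled by the basepoint `y0` and whose parent `p j` is not the root, with
`p' = Function.update p j (p (p j))` and `ℓ' = Function.update ℓ j (ℓ (p j))`. -/
theorem labelledTree_unique_normal_form {V : Type*} [Fintype V] [DecidableEq V] (r : V)
    {Y : Type*} (y0 : Y)
    (Red : (V → V) × (V → Y) → (V → V) × (V → Y) → Prop)
    (hRed : ∀ T T' : (V → V) × (V → Y), Red T T' ↔
      ∃ j : V, T.1 j ≠ r ∧ T.2 j = y0 ∧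
        T'.1 = Function.update T.1 j (T.1 (T.1 j)) ∧
        T'.2 = Function.update T.2 j (T.2 (T.1 j)))
    (p : V → V) (ℓ : V → Y) (hroot : p r = r) (hreach : ∀ v : V, ∃ k : ℕ, p^[k] v = r) :
    ∃! N : (V → V) × (V → Y),
      Relation.ReflTransGen Red (p, ℓ) N ∧ ∀ N', ¬ Red N N' := by
  classical
  have hInv0 : LTreeNF.Inv r (p, ℓ) := ⟨hroot, hreach⟩
  have hstep : ∀ T T', Red T T' → LTreeNF.Inv r T →
      LTreeNF.Inv r T' ∧ LTreeNF.NF r y0 T' = LTreeNF.NF r y0 T ∧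
        (∑ v, LTreeNF.depth r T' v) < ∑ v, LTreeNF.depth r T v := by
    intro T T' hR hT
    obtain ⟨j, hj1, hj2, h3, h4⟩ := (hRed T T').mp hR
    have hT' : T' = LTreeNF.stepT T j := Prod.ext h3 h4
    subst hT'
    refine ⟨LTreeNF.inv_step r y0 T j hT hj1, LTreeNF.NF_step r y0 T j hT hj1 hj2, ?_⟩
    exact Finset.sum_lt_sum (fun v _ => LTreeNF.depth_step_le r T j hT hj1 v)
      ⟨j, Finset.mem_univ j, LTreeNF.depth_step_lt r T j hT hj1⟩
  have key : ∀ n (T : (V → V) × (V → Y)), LTreeNF.Inv r T →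
      (∑ v, LTreeNF.depth r T v) ≤ n →
      Relation.ReflTransGen Red T (LTreeNF.NF r y0 T) := by
    intro n
    induction n using Nat.strong_induction_on with
    | _ n ih =>
    intro T hT hn
    by_cases hall : ∀ v, LTreeNF.Stp r y0 T v
    · rw [LTreeNF.NF_fix r y0 T hall]
    · push_neg at hall
      obtain ⟨j, hj⟩ := hall
      simp only [LTreeNF.Stp, not_or, not_not] at hj
      have hR : Red T (LTreeNF.stepT T j) := (hRed T _).mpr ⟨j, hj.2, hj.1, rfl, rfl⟩
      obtain ⟨hT', hNF, hlt⟩ := hstep T _ hR hT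
      have := ih (n - 1) (by omega) _ hT' (by omega)
      rw [← hNF]
      exact Relation.ReflTransGen.head hR this
  refine ⟨LTreeNF.NF r y0 (p, ℓ), ⟨key _ (p, ℓ) hInv0 le_rfl, ?_⟩, ?_⟩
  · intro N' hRN'
    obtain ⟨j, hj1, hj2, _, _⟩ := (hRed _ _).mp hRN'
    rcases LTreeNF.NF_stp r y0 (p, ℓ) hInv0 j with h | h
    · exact h hj2
    · exact hj1 h
  · rintro N' ⟨hrt, hirr⟩
    have hchain : ∀ M, Relation.ReflTransGen Red (p, ℓ) M →
        LTreeNF.Inv r M ∧ LTreeNF.NF r y0 M = LTreeNF.NF r y0 (p, ℓ) := by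
      intro M hM
      induction hM with
      | refl => exact ⟨hInv0, rfl⟩
      | tail hab hbc ih =>
        obtain ⟨hb, hNFb⟩ := ih
        obtain ⟨hc, hNFc, _⟩ := hstep _ _ hbc hb
        exact ⟨hc, hNFc.trans hNFb⟩
    obtain ⟨hInvN, hNFN⟩ := hchain N' hrt
    have hall : ∀ v, LTreeNF.Stp r y0 N' v := by
      intro v
      by_contra hv
      simp only [LTreeNF.Stp, not_or, not_not] at hv
      exact hirr _ ((hRed N' (LTreeNF.stepT N' v)).mpr ⟨v, hv.2, hv.1, rfl, rfl⟩)
    rw [← hNFN, LTreeNF.NF_fix r y0 N' hall]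
end

section
/- For every n ≥ 1, the number of functions p : Fin n → Fin n for which there exists r : Fin n with p r = r and such that for every v : Fin n some iterate p^[k] v equals r, is exactly n^(n-1). (Equivalently, the number of rooted labelled trees on n vertices, encoded by their parent maps, is n^(n-1).) -/
open Function List

namespace CayleyJoyal

set_option linter.unusedSectionVars false

variable {V : Type*} [Fintype V] [LinearOrder V]

/-- The finset of periodic points of `f`. -/
noncomputable def per (f : V → V) : Finset V :=
  letI := Classical.dec
  Finset.univ.filter fun v => ∃ k, 0 < k ∧ f^[k] v = v

lemma mem_per {f : V → V} {v : V} : v ∈ per f ↔ ∃ k, 0 < k ∧ f^[k] v = v := by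
  classical simp [per]

lemma exists_repeat (f : V → V) (v : V) : ∃ i j, i < j ∧ f^[i] v = f^[j] v := by
  obtain ⟨i, j, hne, h⟩ := Finite.exists_ne_map_eq_of_infinite (fun k : ℕ => f^[k] v)
  rcases hne.lt_or_gt with h' | h'
  · exact ⟨i, j, h', h⟩
  · exact ⟨j, i, h', h.symm⟩

lemma iterate_mem_per (f : V → V) (v : V) : ∃ k, f^[k] v ∈ per f := by
  obtain ⟨i, j, hij, h⟩ := exists_repeat f v
  refine ⟨i, mem_per.2 ⟨j - i, by omega, ?_⟩⟩
  rw [← Function.iterate_add_apply]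
  rw [show j - i + i = j by omega]
  exact h.symm

lemma per_nonempty (f : V → V) [Nonempty V] : (per f).Nonempty := by
  obtain ⟨k, h⟩ := iterate_mem_per f (Classical.arbitrary V)
  exact ⟨_, h⟩

lemma apply_mem_per {f : V → V} {v : V} (hv : v ∈ per f) : f v ∈ per f := by
  obtain ⟨k, hk, h⟩ := mem_per.1 hv
  refine mem_per.2 ⟨k, hk, ?_⟩
  rw [← Function.iterate_succ_apply, Function.iterate_succ_apply', h]

lemma injOn_per (f : V → V) : Set.InjOn f (per f) := by
  intro a ha b hb hab
  obtain ⟨k, hk, hka⟩ := mem_per.1 ha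
  obtain ⟨l, hl, hlb⟩ := mem_per.1 hb
  have hKa : f^[k * l] a = a := by rw [Function.iterate_mul]; exact Function.iterate_fixed hka l
  have hKb : f^[k * l] b = b := by
    rw [mul_comm, Function.iterate_mul]; exact Function.iterate_fixed hlb k
  have hK : 0 < k * l := Nat.mul_pos hk hl
  calc a = f^[k * l] a := hKa.symm
    _ = f^[k * l - 1] (f a) := by
        rw [← Function.iterate_succ_apply]; congr 1; omega
    _ = f^[k * l - 1] (f b) := by rw [hab]
    _ = f^[k * l] b := by rw [← Function.iterate_succ_apply]; congr 1; omega
    _ = b := hKb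

lemma image_per (f : V → V) : Finset.image f (per f) = per f := by
  classical
  apply Finset.eq_of_subset_of_card_le
  · intro v hv
    obtain ⟨a, ha, rfl⟩ := Finset.mem_image.1 hv
    exact apply_mem_per ha
  · rw [Finset.card_image_of_injOn (injOn_per f)]

/-- In presence of a root, periodic points are the root. -/
lemma eq_root_of_periodic {p : V → V} {r : V} (hr : p r = r)
    (hreach : ∀ v, ∃ k, p^[k] v = r) {v : V} {t : ℕ} (ht : 0 < t) (hv : p^[t] v = v) :
    v = r := by
  obtain ⟨k, hk⟩ := hreach v
  have h1 : p^[t * k] v = v := by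
    rw [Function.iterate_mul]; exact Function.iterate_fixed hv k
  have h2 : p^[t * k] v = r := by
    have hkk : k ≤ t * k := Nat.le_mul_of_pos_left k ht
    have : t * k = (t * k - k) + k := by omega
    rw [this, Function.iterate_add_apply, hk]
    exact Function.iterate_fixed hr _
  rw [← h1, h2]

/-- Every point of a finite invariant set on which `g` is injective is periodic. -/
lemma mem_per_of_invariant {g : V → V} {S : Finset V} (hmap : ∀ v ∈ S, g v ∈ S)
    (hinj : Set.InjOn g S) {v : V} (hv : v ∈ S) : v ∈ per g := by
  have horb : ∀ k, g^[k] v ∈ S := by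
    intro k; induction k with
    | zero => exact hv
    | succ k ih => rw [Function.iterate_succ_apply']; exact hmap _ ih
  have key : ∀ i j, 0 < j → g^[i] v = g^[i + j] v → g^[j] v = v := by
    intro i
    induction i with
    | zero => intro j hj h; simpa using h.symm
    | succ i ih =>
        intro j hj h
        apply ih j hj
        rw [show i + 1 + j = (i + j) + 1 by omega] at h
        rw [Function.iterate_succ_apply', Function.iterate_succ_apply'] at h
        exact hinj (horb i) (horb (i + j)) h
  obtain ⟨i, j, hij, h⟩ := exists_repeat g v
  refine mem_per.2 ⟨j - i, by omega, key i (j - i) (by omega) ?_⟩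
  rw [show i + (j - i) = j by omega]; exact h

section Forward

variable [Nonempty V] (f : V → V)

noncomputable def Cl : List V := (per f).sort (· ≤ ·)
noncomputable def LCl : List V := (Cl f).map f
noncomputable def m : ℕ := (per f).card

lemma length_Cl : (Cl f).length = m f := Finset.length_sort _
lemma mem_Cl {v : V} : v ∈ Cl f ↔ v ∈ per f := Finset.mem_sort _
lemma nodup_Cl : (Cl f).Nodup := Finset.sort_nodup _ _
lemma length_LCl : (LCl f).length = m f := by rw [LCl, List.length_map, length_Cl]
lemma nodup_LCl : (LCl f).Nodup :=
  List.Nodup.map_on (fun x hx y hy h => injOn_per f ((mem_Cl f).1 hx) ((mem_Cl f).1 hy) h) (nodup_Cl f)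

lemma mem_LCl {v : V} : v ∈ LCl f ↔ v ∈ per f := by
  classical
  constructor
  · intro hv
    obtain ⟨a, ha, rfl⟩ := List.mem_map.1 hv
    exact apply_mem_per ((mem_Cl f).1 ha)
  · intro hv
    rw [← image_per f] at hv
    obtain ⟨a, ha, rfl⟩ := Finset.mem_image.1 hv
    exact List.mem_map.2 ⟨a, (mem_Cl f).2 ha, rfl⟩

lemma m_pos : 0 < m f := Finset.card_pos.2 (per_nonempty f)

noncomputable def Lf : ℕ → V := fun i => (LCl f).getD i (Classical.arbitrary V)

lemma Lf_get {i : ℕ} (hi : i < m f) :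
    Lf f i = (LCl f).get ⟨i, by rw [length_LCl]; exact hi⟩ :=
  List.getD_eq_get _ _ ⟨i, _⟩

lemma Lf_mem {i : ℕ} (hi : i < m f) : Lf f i ∈ LCl f := by
  rw [Lf_get f hi]; apply List.get_mem

lemma Lf_mem_per {i : ℕ} (hi : i < m f) : Lf f i ∈ per f := (mem_LCl f).1 (Lf_mem f hi)

lemma indexOf_Lf {i : ℕ} (hi : i < m f) : (LCl f).idxOf (Lf f i) = i := by
  rw [Lf_get f hi]
  exact List.get_idxOf (nodup_LCl f) _

lemma Lf_inj {i j : ℕ} (hi : i < m f) (hj : j < m f) (h : Lf f i = Lf f j) : i = j := by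
  have := indexOf_Lf f hi
  rw [h, indexOf_Lf f hj] at this
  omega

lemma Lf_indexOf {v : V} (hv : v ∈ LCl f) : Lf f ((LCl f).idxOf v) = v := by
  have h : (LCl f).idxOf v < (LCl f).length := List.idxOf_lt_length_iff.2 hv
  rw [Lf, List.getD_eq_getElem _ _ h, List.getElem_idxOf h]

lemma indexOf_lt_m {v : V} (hv : v ∈ LCl f) : (LCl f).idxOf v < m f := by
  rw [← length_LCl f]; exact List.idxOf_lt_length_iff.2 hv

/-- The parent map of the tree associated to an endofunction by Joyal's bijection. -/
noncomputable def tmap : V → V := fun v =>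
  if v ∈ LCl f then Lf f (min ((LCl f).idxOf v + 1) (m f - 1)) else f v

noncomputable def rpt : V := Lf f (m f - 1)
noncomputable def bpt : V := Lf f 0

lemma tmap_not_mem {v : V} (hv : v ∉ per f) : tmap f v = f v := by
  rw [tmap, if_neg (fun h => hv ((mem_LCl f).1 h))]

lemma tmap_Lf {i : ℕ} (hi : i < m f) :
    tmap f (Lf f i) = Lf f (min (i + 1) (m f - 1)) := by
  rw [tmap, if_pos (Lf_mem f hi), indexOf_Lf f hi]

lemma iter_tmap_Lf (t : ℕ) {i : ℕ} (hi : i < m f) :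
    (tmap f)^[t] (Lf f i) = Lf f (min (i + t) (m f - 1)) := by
  induction t generalizing i with
  | zero => simp only [Function.iterate_zero, id_eq]; congr 1; omega
  | succ t ih =>
      rw [Function.iterate_succ_apply, tmap_Lf f hi]
      have h1 : min (i + 1) (m f - 1) < m f := by have := m_pos f; omega
      rw [ih h1]; congr 1; omega

lemma tmap_rpt : tmap f (rpt f) = rpt f := by
  have hm := m_pos f
  rw [rpt, tmap_Lf f (by omega)]
  congr 1; omega

lemma iter_tmap_bpt (t : ℕ) : (tmap f)^[t] (bpt f) = Lf f (min t (m f - 1)) := by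
  have := iter_tmap_Lf f t (m_pos f) (i := 0)
  simpa [bpt] using this

lemma tmap_agrees {v : V} {j : ℕ} (h : ∀ i < j, f^[i] v ∉ per f) :
    (tmap f)^[j] v = f^[j] v := by
  induction j with
  | zero => rfl
  | succ j ih =>
      rw [Function.iterate_succ_apply', Function.iterate_succ_apply',
        ih (fun i hi => h i (by omega)), tmap_not_mem f (h j (by omega))]

lemma tmap_reach (v : V) : ∃ k, (tmap f)^[k] v = rpt f := by
  classical
  set k0 := Nat.find (iterate_mem_per f v) with hk0def
  have hk0 : f^[k0] v ∈ per f := Nat.find_spec (iterate_mem_per f v)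
  have hmin : ∀ i < k0, f^[i] v ∉ per f := fun i hi => Nat.find_min _ hi
  have h1 : (tmap f)^[k0] v = f^[k0] v := tmap_agrees f hmin
  have hmem : f^[k0] v ∈ LCl f := (mem_LCl f).2 hk0
  have hiL : Lf f ((LCl f).idxOf (f^[k0] v)) = f^[k0] v := Lf_indexOf f hmem
  have him : (LCl f).idxOf (f^[k0] v) < m f := indexOf_lt_m f hmem
  refine ⟨(m f - 1) + k0, ?_⟩
  rw [Function.iterate_add_apply, h1, ← hiL, iter_tmap_Lf f _ him, rpt]
  congr 1; omega

lemma tmap_spec : ∃ r, tmap f r = r ∧ ∀ v, ∃ k, (tmap f)^[k] v = r :=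
  ⟨rpt f, tmap_rpt f, tmap_reach f⟩

end Forward

section Backward

variable [Nonempty V] (p : V → V) (b : V) (k0 : ℕ)

noncomputable def Sl : List V := (List.range (k0 + 1)).map fun i => p^[i] b

noncomputable def Dl : List V := (Sl p b k0).toFinset.sort (· ≤ ·)

/-- The inverse of Joyal's bijection: recover an endofunction from a parent map
and a marked vertex. -/
noncomputable def jinv : V → V := fun v =>
  if v ∈ Dl p b k0 then p^[(Dl p b k0).idxOf v] b else p v

lemma length_Sl : (Sl p b k0).length = k0 + 1 := by simp [Sl]

lemma mem_Sl {v : V} : v ∈ Sl p b k0 ↔ ∃ i ≤ k0, p^[i] b = v := by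
  simp only [Sl, List.mem_map, List.mem_range]
  constructor
  · rintro ⟨i, hi, rfl⟩; exact ⟨i, by omega, rfl⟩
  · rintro ⟨i, hi, rfl⟩; exact ⟨i, by omega, rfl⟩

variable {r : V} (hr : p r = r) (hreach : ∀ v, ∃ k, p^[k] v = r)
  (hk : p^[k0] b = r) (hmin : ∀ j < k0, p^[j] b ≠ r)

section
include hr hreach hk hmin

lemma s_inj : ∀ i ≤ k0, ∀ j ≤ k0, p^[i] b = p^[j] b → i = j := by
  have key : ∀ i j, i < j → j ≤ k0 → p^[i] b ≠ p^[j] b := by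
    intro i j hij hj h
    have hper : p^[j - i] (p^[i] b) = p^[i] b := by
      rw [← Function.iterate_add_apply, show j - i + i = j by omega]
      exact h.symm
    have := eq_root_of_periodic hr hreach (t := j - i) (by omega) hper
    exact hmin i (by omega) this
  intro i hi j hj h
  rcases lt_trichotomy i j with h' | h' | h'
  · exact absurd h (key i j h' hj)
  · exact h'
  · exact absurd h.symm (key j i h' hi)

lemma nodup_Sl : (Sl p b k0).Nodup := by
  refine List.Nodup.map_on ?_ List.nodup_range
  intro i hi j hj h
  exact s_inj p b k0 hr hreach hk hmin i (by simpa using Nat.lt_succ_iff.1 (List.mem_range.1 hi))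
    j (by simpa using Nat.lt_succ_iff.1 (List.mem_range.1 hj)) h

end

lemma mem_Dl {v : V} : v ∈ Dl p b k0 ↔ v ∈ Sl p b k0 := by
  rw [Dl, Finset.mem_sort, List.mem_toFinset]

lemma nodup_Dl : (Dl p b k0).Nodup := Finset.sort_nodup _ _

include hr hreach hk hmin

lemma length_Dl : (Dl p b k0).length = k0 + 1 := by
  rw [Dl, Finset.length_sort,
    List.toFinset_card_of_nodup (nodup_Sl p b k0 hr hreach hk hmin), length_Sl]

omit hreach hmin in
lemma iterate_mem_Sl (k : ℕ) : p^[k] b ∈ Sl p b k0 := by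
  rcases le_or_gt k k0 with h | h
  · exact (mem_Sl p b k0).2 ⟨k, h, rfl⟩
  · refine (mem_Sl p b k0).2 ⟨k0, le_rfl, ?_⟩
    rw [hk, show k = (k - k0) + k0 by omega, Function.iterate_add_apply, hk]
    exact (Function.iterate_fixed hr _).symm

omit hr hreach hmin in
lemma r_mem_Sl : r ∈ Sl p b k0 := (mem_Sl p b k0).2 ⟨k0, le_rfl, hk⟩

omit hr hreach hk hmin in
lemma jinv_not_mem {v : V} (hv : v ∉ Sl p b k0) : jinv p b k0 v = p v := by
  rw [jinv, if_neg (fun h => hv ((mem_Dl p b k0).1 h))]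

omit hr hreach hk hmin in
lemma jinv_Dl_get {i : ℕ} (hi : i < (Dl p b k0).length) :
    jinv p b k0 ((Dl p b k0).get ⟨i, hi⟩) = p^[i] b := by
  have hmem : (Dl p b k0).get ⟨i, hi⟩ ∈ Dl p b k0 := by apply List.get_mem
  rw [jinv, if_pos hmem, List.get_idxOf (nodup_Dl p b k0)]

omit hreach hmin in
lemma jinv_maps_Sl {v : V} (hv : v ∈ Sl p b k0) : jinv p b k0 v ∈ Sl p b k0 := by
  rw [jinv, if_pos ((mem_Dl p b k0).2 hv)]
  exact iterate_mem_Sl p b k0 hr hk _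

lemma jinv_injOn : Set.InjOn (jinv p b k0) ((Sl p b k0).toFinset : Set V) := by
  intro u hu v hv huv
  simp only [Finset.coe_sort_coe, List.coe_toFinset, Set.mem_setOf_eq] at hu hv
  have hu' : u ∈ Dl p b k0 := (mem_Dl p b k0).2 hu
  have hv' : v ∈ Dl p b k0 := (mem_Dl p b k0).2 hv
  have hul : (Dl p b k0).idxOf u < (Dl p b k0).length := List.idxOf_lt_length_iff.2 hu'
  have hvl : (Dl p b k0).idxOf v < (Dl p b k0).length := List.idxOf_lt_length_iff.2 hv'
  simp only [jinv] at huv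
  rw [if_pos hu', if_pos hv'] at huv
  have hlen := length_Dl p b k0 hr hreach hk hmin
  have := s_inj p b k0 hr hreach hk hmin _ (by omega) _ (by omega) huv
  have h1 : (Dl p b k0).get ⟨_, hul⟩ = u := List.idxOf_get hul
  have h2 : (Dl p b k0).get ⟨_, hvl⟩ = v := List.idxOf_get hvl
  rw [← h1, ← h2]
  congr 1
  exact Fin.ext this

lemma per_jinv : per (jinv p b k0) = (Sl p b k0).toFinset := by
  classical
  apply Finset.Subset.antisymm
  · intro v hv
    obtain ⟨t, ht, htv⟩ := mem_per.1 hv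
    by_contra hvS
    rw [List.mem_toFinset] at hvS
    by_cases hent : ∃ k, (jinv p b k0)^[k] v ∈ Sl p b k0
    · obtain ⟨k, hkent⟩ := hent
      have hstay : ∀ d, (jinv p b k0)^[k + d] v ∈ Sl p b k0 := by
        intro d
        induction d with
        | zero => exact hkent
        | succ d ih =>
            rw [show k + (d+1) = (k+d) + 1 by omega, Function.iterate_succ_apply']
            exact jinv_maps_Sl p b k0 hr hk ih
      have hmult : (jinv p b k0)^[t * k + t] v = v := by
        rw [show t * k + t = t * (k + 1) by ring, Function.iterate_mul]
        exact Function.iterate_fixed htv _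
      have : (jinv p b k0)^[t * k + t] v ∈ Sl p b k0 := by
        have hkt : k ≤ t * k := Nat.le_mul_of_pos_left k ht
        rw [show t * k + t = k + (t * k + t - k) by omega]
        exact hstay _
      rw [hmult] at this
      exact hvS this
    · push_neg at hent
      have hagree : ∀ k, (jinv p b k0)^[k] v = p^[k] v := by
        intro k
        induction k with
        | zero => rfl
        | succ k ih =>
            rw [Function.iterate_succ_apply', Function.iterate_succ_apply', ih]
            apply jinv_not_mem
            rw [← ih]
            exact hent k
      rw [hagree] at htv
      have := eq_root_of_periodic hr hreach ht htv
      exact hvS (this ▸ r_mem_Sl p b k0 hk)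
  · intro v hv
    exact mem_per_of_invariant
      (fun u hu => (List.mem_toFinset).2
        (jinv_maps_Sl p b k0 hr hk ((List.mem_toFinset).1 hu)))
      (jinv_injOn p b k0 hr hreach hk hmin) hv

end Backward


section Roundtrips

variable [Nonempty V]

lemma Lf_eq_f_get (f : V → V) {i : ℕ} (hi : i < m f) :
    Lf f i = f ((Cl f).get ⟨i, by rw [length_Cl]; exact hi⟩) := by
  rw [Lf_get f hi]
  simp only [LCl, List.get_eq_getElem, List.getElem_map]

lemma Lf_eq_f_getD (f : V → V) {i : ℕ} (hi : i < m f) :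
    Lf f i = f ((Cl f).getD i (Classical.arbitrary V)) := by
  rw [Lf_eq_f_get f hi, List.getD_eq_get _ _ ⟨i, by rw [length_Cl]; exact hi⟩]

lemma jinv_Dl_getD (p : V → V) (b : V) (k0 : ℕ) {i : ℕ} (hi : i < (Dl p b k0).length) :
    jinv p b k0 ((Dl p b k0).getD i (Classical.arbitrary V)) = p^[i] b := by
  rw [show (Dl p b k0).getD i (Classical.arbitrary V) = (Dl p b k0).get ⟨i, hi⟩ from
    List.getD_eq_get _ _ ⟨i, hi⟩, jinv_Dl_get]

lemma Lf_indexOf_Cl (f : V → V) {v : V} (hv : v ∈ Cl f) :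
    Lf f ((Cl f).idxOf v) = f v := by
  have hi : (Cl f).idxOf v < (Cl f).length := List.idxOf_lt_length_iff.2 hv
  rw [Lf_eq_f_get f (by rw [← length_Cl f]; exact hi)]
  congr 1
  exact List.idxOf_get hi

lemma Sl_tmap_toFinset (f : V → V) :
    (Sl (tmap f) (bpt f) (m f - 1)).toFinset = per f := by
  ext v
  rw [List.mem_toFinset, mem_Sl, ← mem_LCl f]
  constructor
  · rintro ⟨i, hi, rfl⟩
    rw [iter_tmap_bpt f i]
    exact Lf_mem f (by have := m_pos f; omega)
  · intro hv
    refine ⟨(LCl f).idxOf v, ?_, ?_⟩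
    · have := indexOf_lt_m f hv; omega
    · rw [iter_tmap_bpt f _]
      rw [show min ((LCl f).idxOf v) (m f - 1) = (LCl f).idxOf v by
        have := indexOf_lt_m f hv; omega]
      exact Lf_indexOf f hv

lemma roundtrip1 (f : V → V) : jinv (tmap f) (bpt f) (m f - 1) = f := by
  have hDl : Dl (tmap f) (bpt f) (m f - 1) = Cl f := by
    rw [Dl, Sl_tmap_toFinset f, Cl]
  funext v
  by_cases hv : v ∈ per f
  · have hvC : v ∈ Cl f := (mem_Cl f).2 hv
    have hi : (Cl f).idxOf v < (Cl f).length := List.idxOf_lt_length_iff.2 hvC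
    rw [jinv, hDl, if_pos hvC, iter_tmap_bpt f _]
    rw [show min ((Cl f).idxOf v) (m f - 1) = (Cl f).idxOf v by
      rw [length_Cl] at hi; omega]
    exact Lf_indexOf_Cl f hvC
  · have hvS : v ∉ Sl (tmap f) (bpt f) (m f - 1) := by
      intro h
      exact hv (by rw [← Sl_tmap_toFinset f]; exact List.mem_toFinset.2 h)
    rw [jinv_not_mem _ _ _ hvS, tmap_not_mem f hv]

variable {p : V → V} {b r : V} {k0 : ℕ} (hr : p r = r) (hreach : ∀ v, ∃ k, p^[k] v = r)
  (hk : p^[k0] b = r) (hmin : ∀ j < k0, p^[j] b ≠ r)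

include hr hreach hk hmin

lemma per_jinv' : per (jinv p b k0) = (Sl p b k0).toFinset :=
  per_jinv p b k0 hr hreach hk hmin

lemma m_jinv : m (jinv p b k0) = k0 + 1 := by
  rw [m, per_jinv' hr hreach hk hmin,
    List.toFinset_card_of_nodup (nodup_Sl p b k0 hr hreach hk hmin), length_Sl]

lemma Cl_jinv : Cl (jinv p b k0) = Dl p b k0 := by
  rw [Cl, per_jinv' hr hreach hk hmin, Dl]

lemma Lf_jinv {i : ℕ} (hi : i ≤ k0) : Lf (jinv p b k0) i = p^[i] b := by
  have hm : i < m (jinv p b k0) := by rw [m_jinv hr hreach hk hmin]; omega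
  have hlen : i < (Dl p b k0).length := by
    rw [length_Dl p b k0 hr hreach hk hmin]; omega
  rw [Lf_eq_f_getD _ hm, Cl_jinv hr hreach hk hmin]
  exact jinv_Dl_getD p b k0 hlen

lemma bpt_jinv : bpt (jinv p b k0) = b := by
  rw [bpt, Lf_jinv hr hreach hk hmin (Nat.zero_le _)]
  rfl

lemma tmap_jinv : tmap (jinv p b k0) = p := by
  funext v
  by_cases hv : v ∈ Sl p b k0
  · obtain ⟨i, hi, rfl⟩ := (mem_Sl p b k0).1 hv
    have h1 : p^[i] b = Lf (jinv p b k0) i := (Lf_jinv hr hreach hk hmin hi).symm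
    have hm : i < m (jinv p b k0) := by rw [m_jinv hr hreach hk hmin]; omega
    rw [h1, tmap_Lf _ hm, m_jinv hr hreach hk hmin]
    simp only [Nat.add_sub_cancel]
    rcases eq_or_lt_of_le hi with rfl | hik
    · rw [show min (i + 1) i = i by omega, Lf_jinv hr hreach hk hmin le_rfl, hk, hr]
    · rw [show min (i + 1) k0 = i + 1 by omega, Lf_jinv hr hreach hk hmin (by omega),
        Function.iterate_succ_apply', ← h1]
  · have hvp : v ∉ per (jinv p b k0) := by
      rw [per_jinv' hr hreach hk hmin]
      exact fun h => hv (List.mem_toFinset.1 h)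
    rw [tmap_not_mem _ hvp, jinv_not_mem p b k0 hv]

end Roundtrips


section Main

variable [Nonempty V]

open Classical in
/-- Number of steps from `b` to `r` under iteration of `p`. -/
noncomputable def steps (p : V → V) (b r : V) : ℕ :=
  if h : ∃ k, p^[k] b = r then Nat.find h else 0

lemma steps_spec {p : V → V} {b r : V} (h : ∃ k, p^[k] b = r) :
    p^[steps p b r] b = r ∧ ∀ j < steps p b r, p^[j] b ≠ r := by
  rw [steps, dif_pos h]
  exact ⟨Nat.find_spec h, fun j hj => Nat.find_min h hj⟩

lemma steps_eq {p : V → V} {b r : V} {k : ℕ} (hk : p^[k] b = r)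
    (hmin : ∀ j < k, p^[j] b ≠ r) : steps p b r = k := by
  rw [steps, dif_pos ⟨k, hk⟩, Nat.find_eq_iff]
  exact ⟨hk, fun j hj => hmin j hj⟩

/-- Joyal's bijection: endofunctions correspond to trees with a marked vertex. -/
noncomputable def joyal :
    (V → V) ≃ V × {p : V → V // ∃ r, p r = r ∧ ∀ v, ∃ k, p^[k] v = r} where
  toFun f := (bpt f, ⟨tmap f, tmap_spec f⟩)
  invFun x := jinv x.2.1 x.1 (steps x.2.1 x.1 x.2.2.choose)
  left_inv f := by
    dsimp only
    have hch : (tmap_spec f).choose = rpt f := by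
      have h1 := (tmap_spec f).choose_spec.1
      exact eq_root_of_periodic (tmap_rpt f) (tmap_reach f) (t := 1) one_pos (by simpa using h1)
    have hm := m_pos f
    have hfind : steps (tmap f) (bpt f) (tmap_spec f).choose = m f - 1 := by
      rw [hch]
      apply steps_eq
      · rw [iter_tmap_bpt f, rpt]; congr 1; omega
      · intro j hj hj'
        rw [iter_tmap_bpt f, rpt] at hj'
        have := Lf_inj f (by omega) (by omega) hj'
        omega
    rw [hfind, roundtrip1]
  right_inv := by
    rintro ⟨b, p, hp⟩
    have hr := hp.choose_spec.1
    have hreach := hp.choose_spec.2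
    obtain ⟨hk, hmin⟩ := steps_spec (hreach b)
    dsimp only
    refine Prod.ext ?_ ?_
    · exact bpt_jinv hr hreach hk hmin
    · exact Subtype.ext (tmap_jinv hr hreach hk hmin)

end Main

end CayleyJoyal

/-- Cayley's formula, in terms of parent maps: for `n ≥ 1`, the number of maps
`p : Fin n → Fin n` admitting a root `r` with `p r = r` such that every vertex
reaches `r` under iteration of `p` is exactly `n ^ (n - 1)`. -/
theorem card_rooted_labelled_trees (n : ℕ) (hn : 1 ≤ n) :
    Nat.card {p : Fin n → Fin n // ∃ r : Fin n, p r = r ∧ ∀ v : Fin n, ∃ k : ℕ, p^[k] v = r} =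
      n ^ (n - 1) := by
  haveI : Nonempty (Fin n) := ⟨⟨0, by omega⟩⟩
  have h1 := Nat.card_congr (CayleyJoyal.joyal (V := Fin n))
  rw [Nat.card_prod] at h1
  have h2 : Nat.card (Fin n → Fin n) = n ^ n := by
    simp [Nat.card_eq_fintype_card]
  have h3 : Nat.card (Fin n) = n := by simp
  rw [h2, h3] at h1
  have h4 : n ^ n = n * n ^ (n - 1) := by
    rw [← pow_succ', Nat.sub_add_cancel hn]
  rw [h4] at h1
  have hn0 : 0 < n := hn
  exact Nat.eq_of_mul_eq_mul_left hn0 h1.symm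
end

section
/- Let k be a field and A a two-dimensional k-vector space equipped with a k-bilinear multiplication satisfying the Perm-algebra identities (x*y)*z = x*(y*z) and x*(y*z) = x*(z*y) for all x, y, z, and suppose the multiplication is not commutative. Then there exists a basis (a, b) of A with multiplication table a*a = a, a*b = 0, b*b = 0, b*a = b; i.e. every two-dimensional noncommutative Perm-algebra over k is isomorphic to this algebra. -/
/-- Every two-dimensional noncommutative Perm-algebra over a field `k` has a basis
`(a, b)` with multiplication table `a*a = a`, `a*b = 0`, `b*b = 0`, `b*a = b`. -/
theorem two_dim_noncomm_perm_algebra {k A : Type*} [Field k] [AddCommGroup A] [Module k A]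
    [Mul A]
    (hdim : Module.finrank k A = 2)
    (hadd_left : ∀ x y z : A, (x + y) * z = x * z + y * z)
    (hadd_right : ∀ x y z : A, x * (y + z) = x * y + x * z)
    (hsmul_left : ∀ (c : k) (x y : A), (c • x) * y = c • (x * y))
    (hsmul_right : ∀ (c : k) (x y : A), x * (c • y) = c • (x * y))
    (hassoc : ∀ x y z : A, (x * y) * z = x * (y * z))
    (hrcomm : ∀ x y z : A, x * (y * z) = x * (z * y))
    (hnc : ∃ x y : A, x * y ≠ y * x) :
    ∃ a b : A, LinearIndependent k ![a, b] ∧ Submodule.span k {a, b} = ⊤ ∧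
      a * a = a ∧ a * b = 0 ∧ b * b = 0 ∧ b * a = b := by
  have hfd : FiniteDimensional k A := FiniteDimensional.of_finrank_pos (by omega)
  obtain ⟨x, y, hxy⟩ := hnc
  set c := x * y - y * x with hcdef
  have hc0 : c ≠ 0 := sub_ne_zero.mpr hxy
  let f : A →ₗ[k] A →ₗ[k] A := LinearMap.mk₂ k (· * ·) hadd_left hsmul_left hadd_right hsmul_right
  have hf : ∀ u v : A, f u v = u * v := fun _ _ => rfl
  -- every left multiplication kills the commutator c
  have hkill : ∀ z : A, z * c = 0 := by
    intro z
    have h1 : f z (x * y - y * x) = f z (x * y) - f z (y * x) := map_sub _ _ _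
    simp only [hf] at h1
    rw [hcdef, h1, hrcomm z y x, sub_self]
  -- extend c to a basis (u, c)
  have hne : Submodule.span k ({c} : Set A) ≠ ⊤ := by
    intro h
    have h1 := finrank_span_singleton (K := k) hc0
    rw [h, finrank_top, hdim] at h1
    omega
  obtain ⟨u, hu⟩ : ∃ u : A, u ∉ Submodule.span k ({c} : Set A) := by
    by_contra h
    push_neg at h
    exact hne (Submodule.eq_top_iff'.mpr h)
  have hli : LinearIndependent k ![u, c] := by
    rw [linearIndependent_fin2]
    simp only [Matrix.cons_val_one, Matrix.head_cons, Matrix.cons_val_zero]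
    refine ⟨hc0, fun s hs => hu ?_⟩
    exact hs ▸ Submodule.smul_mem _ s (Submodule.mem_span_singleton_self c)
  have hcard : Fintype.card (Fin 2) = Module.finrank k A := by simp [hdim]
  let B := basisOfLinearIndependentOfCardEqFinrank hli hcard
  have hspan : Submodule.span k ({u, c} : Set A) = ⊤ := by
    have h1 := B.span_eq
    rw [coe_basisOfLinearIndependentOfCardEqFinrank] at h1
    have h2 : Set.range ![u, c] = ({u, c} : Set A) := by
      ext z
      simp [Matrix.range_cons, Matrix.range_empty]
      tauto
    rwa [h2] at h1
  -- coordinates of x and y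
  obtain ⟨p, q, hxp⟩ : ∃ p q : k, p • u + q • c = x :=
    Submodule.mem_span_pair.mp (by rw [hspan]; trivial)
  obtain ⟨r, s, hyp⟩ : ∃ r s : k, r • u + s • c = y :=
    Submodule.mem_span_pair.mp (by rw [hspan]; trivial)
  -- general expansion of products of coordinate combinations
  have hexp : ∀ p q r s : k,
      (p • u + q • c) * (r • u + s • c) = (p * r) • (u * u) + (q * r) • (c * u) := by
    intro p q r s
    rw [hadd_left, hsmul_left, hsmul_left, hadd_right, hadd_right, hsmul_right, hsmul_right,
      hsmul_right, hsmul_right, hkill u, hkill c]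
    module
  have hcomm : c = (q * r - p * s) • (c * u) := by
    conv_lhs => rw [hcdef]
    rw [← hxp, ← hyp, hexp, hexp]
    module
  set t := q * r - p * s with htdef
  have ht : t ≠ 0 := fun h => hc0 (by rw [hcomm, h, zero_smul])
  have hcu : c * u = t⁻¹ • c := by
    conv_rhs => rw [hcomm, smul_smul, inv_mul_cancel₀ ht, one_smul]
  -- coordinates of u*u
  obtain ⟨α, β, huu⟩ : ∃ α β : k, α • u + β • c = u * u :=
    Submodule.mem_span_pair.mp (by rw [hspan]; trivial)
  have hL : (u * u) * u = α • (u * u) + β • (c * u) := by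
    conv_lhs => rw [← huu]
    rw [hadd_left, hsmul_left, hsmul_left]
  have hR : u * (u * u) = α • (u * u) := by
    conv_lhs => rw [← huu]
    rw [hadd_right, hsmul_right, hsmul_right, hkill u, smul_zero, add_zero]
  have hβ : β = 0 := by
    have h1 := hassoc u u u
    rw [hL, hR] at h1
    have h2 : β • (c * u) = 0 := by
      have h3 : α • (u * u) + β • (c * u) = α • (u * u) + 0 := by rw [h1, add_zero]
      exact add_left_cancel h3
    rw [hcu, smul_smul] at h2
    rcases smul_eq_zero.mp h2 with h | h
    · rcases mul_eq_zero.mp h with h' | h'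
      · exact h'
      · exact absurd h' (inv_ne_zero ht)
    · exact absurd h hc0
  have huu' : u * u = α • u := by rw [← huu, hβ, zero_smul, add_zero]
  -- second associativity computation: α = t⁻¹
  have hα : α = t⁻¹ := by
    have h1 := hassoc c u u
    rw [hcu, hsmul_left, hcu, smul_smul] at h1
    rw [huu', hsmul_right, hcu, smul_smul] at h1
    have h2 : (t⁻¹ * t⁻¹ - α * t⁻¹) • c = 0 := by rw [sub_smul, h1, sub_self]
    rcases smul_eq_zero.mp h2 with h | h
    · exact (mul_right_cancel₀ (inv_ne_zero ht) (sub_eq_zero.mp h)).symm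
    · exact absurd h hc0
  have hα0 : α ≠ 0 := hα ▸ inv_ne_zero ht
  refine ⟨α⁻¹ • u, c, ?_, ?_, ?_, ?_, ?_, ?_⟩
  · rw [linearIndependent_fin2]
    refine ⟨hc0, fun s hs => hu ?_⟩
    simp only [Matrix.cons_val_one, Matrix.head_cons, Matrix.cons_val_zero] at hs
    have h4 : u = α • (s • c) := by
      rw [hs, smul_smul, mul_inv_cancel₀ hα0, one_smul]
    exact h4 ▸ Submodule.smul_mem _ α (Submodule.smul_mem _ s (Submodule.mem_span_singleton_self c))
  · rw [eq_top_iff, ← hspan]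
    apply Submodule.span_le.mpr
    rintro z (rfl | rfl)
    · have hz : α • (α⁻¹ • z) = z := by rw [smul_smul, mul_inv_cancel₀ hα0, one_smul]
      have hm : α • (α⁻¹ • z) ∈ Submodule.span k ({α⁻¹ • z, c} : Set A) :=
        Submodule.smul_mem _ α (Submodule.subset_span (Set.mem_insert _ _))
      rwa [hz] at hm
    · exact Submodule.subset_span (by simp)
  · rw [hsmul_left, hsmul_right, huu', smul_smul, smul_smul]
    congr 1
    field_simp
  · rw [hsmul_left, hkill u, smul_zero]
  · exact hkill c
  · rw [hsmul_right, hcu, smul_smul, ← hα, inv_mul_cancel₀ hα0, one_smul]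
end

section
/- Let T be the formal power series over ℚ whose constant coefficient is 0 and whose coefficient of X^n is n^(n−1)/n! for every n ≥ 1 (the exponential generating function of rooted labelled trees). Then T satisfies the functional equation T = X · exp(T), where exp(T) denotes the substitution of T into the exponential power series Σ_{m≥0} X^m/m! (well-defined since T has zero constant term). Equivalently, the power series T(−X) is inverse to −X·exp(−X) under composition. -/
section AbelIdentity
open Polynomial Finset

lemma natDegree_X_add_one : (X + 1 : Polynomial ℚ).natDegree = 1 := by
  simpa using natDegree_X_add_C (1 : ℚ)

lemma comp_X_add_one_degree (P : Polynomial ℚ) : (P.comp (X + 1)).degree = P.degree := by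
  rcases eq_or_ne P 0 with h | h
  · simp [h]
  · rw [degree_eq_natDegree h, degree_eq_natDegree (fun hc => h (by
      rcases comp_eq_zero_iff.mp hc with h1 | h1
      · exact h1
      · exfalso
        have := h1.2
        simp only [coeff_add, coeff_X_zero, coeff_one_zero, zero_add] at this
        have h2 := natDegree_X_add_one
        rw [this] at h2
        simp at h2))]
    norm_cast
    rw [natDegree_comp, natDegree_X_add_one, mul_one]

/-- Alternating finite differences kill polynomials of low degree. -/
lemma fd : ∀ (n : ℕ) (P : Polynomial ℚ), P.degree < (n : WithBot ℕ) →
    ∑ k ∈ range (n + 1), (-1 : ℚ) ^ k * (n.choose k : ℚ) * P.eval (k : ℚ) = 0 := by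
  intro n
  induction n with
  | zero =>
    intro P hP
    have : P = 0 := by
      rwa [Nat.cast_zero, Nat.WithBot.lt_zero_iff, degree_eq_bot] at hP
    simp [this]
  | succ n ih =>
    intro P hP
    have hdeg : P.degree ≤ (n : WithBot ℕ) := by
      rcases eq_or_ne P 0 with h | h
      · simp [h]
      · rw [degree_eq_natDegree h] at hP ⊢
        exact_mod_cast Nat.lt_succ_iff.mp (by exact_mod_cast hP)
    set Q : Polynomial ℚ := P.comp (X + 1) - P with hQ
    have hQdeg : Q.degree < (n : WithBot ℕ) := by
      rcases eq_or_ne P 0 with h | h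
      · have : Q = 0 := by simp [hQ, h]
        rw [this, degree_zero]
        exact WithBot.bot_lt_coe n
      · have h1 := comp_X_add_one_degree P
        have h2 : P.comp (X + 1) ≠ 0 := by
          intro hc
          rw [hc, degree_zero, eq_comm, degree_eq_bot] at h1
          exact h (h1 ▸ rfl)
        have h3 : (P.comp (X + 1)).leadingCoeff = P.leadingCoeff := by
          rw [leadingCoeff_comp (natDegree_X_add_one ▸ one_ne_zero)]
          rw [show (X + 1 : Polynomial ℚ).leadingCoeff = 1 by
            simpa using leadingCoeff_X_add_C (1 : ℚ), one_pow, mul_one]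
        exact lt_of_lt_of_le (hQ ▸ degree_sub_lt h1 h2 h3) (h1 ▸ hdeg)
    have key := ih Q hQdeg
    have hQeval : ∀ k : ℕ, Q.eval (k : ℚ) = P.eval ((k : ℚ) + 1) - P.eval (k : ℚ) := by
      intro k
      simp [hQ, eval_comp]
    have expand : ∑ k ∈ range (n + 2), (-1 : ℚ) ^ k * ((n+1).choose k : ℚ) * P.eval (k : ℚ)
        = - ∑ k ∈ range (n + 1), (-1 : ℚ) ^ k * (n.choose k : ℚ) * Q.eval (k : ℚ) := by
      have rhs : - ∑ k ∈ range (n + 1), (-1 : ℚ) ^ k * (n.choose k : ℚ) * Q.eval (k : ℚ)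
          = ∑ k ∈ range (n + 1), (-1 : ℚ)^(k+1) * (n.choose k : ℚ) * P.eval ((k:ℚ) + 1)
            + ∑ k ∈ range (n + 1), (-1 : ℚ)^k * (n.choose k : ℚ) * P.eval (k : ℚ) := by
        rw [← Finset.sum_add_distrib, ← Finset.sum_neg_distrib]
        refine Finset.sum_congr rfl fun k _ => ?_
        rw [hQeval k]; ring
      rw [rhs, Finset.sum_range_succ']
      have pascal : ∀ k : ℕ, (((n+1).choose (k+1) : ℚ)) = (n.choose (k+1) : ℚ) + (n.choose k : ℚ) := by
        intro k
        rw [Nat.choose_succ_succ]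
        push_cast; ring
      have lhs1 : ∑ k ∈ range (n+1), (-1:ℚ)^(k+1) * ((n+1).choose (k+1) : ℚ) * P.eval ((k+1 : ℕ) : ℚ)
          = ∑ k ∈ range (n+1), (-1:ℚ)^(k+1) * (n.choose (k+1) : ℚ) * P.eval ((k+1:ℕ) : ℚ)
            + ∑ k ∈ range (n+1), (-1:ℚ)^(k+1) * (n.choose k : ℚ) * P.eval ((k+1:ℕ):ℚ) := by
        rw [← Finset.sum_add_distrib]
        refine Finset.sum_congr rfl fun k _ => ?_
        rw [pascal]; ring
      rw [lhs1]
      have lhs2 : ∑ k ∈ range (n+1), (-1:ℚ)^(k+1) * (n.choose (k+1) : ℚ) * P.eval ((k+1:ℕ) : ℚ)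
          + (-1:ℚ)^0 * ((n+1).choose 0 : ℚ) * P.eval ((0:ℕ):ℚ)
          = ∑ k ∈ range (n + 1), (-1 : ℚ)^k * (n.choose k : ℚ) * P.eval (k : ℚ) := by
        rw [Finset.sum_range_succ]
        simp only [Nat.choose_succ_self, Nat.cast_zero, mul_zero, zero_mul, add_zero]
        rw [Finset.sum_range_succ' (fun k => (-1:ℚ)^k * (n.choose k : ℚ) * P.eval (k : ℚ)) n]
        simp
      have cast1 : ∀ k ∈ range (n+1), (-1:ℚ)^(k+1) * (n.choose k : ℚ) * P.eval ((k+1:ℕ):ℚ)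
          = (-1:ℚ)^(k+1) * (n.choose k : ℚ) * P.eval ((k:ℚ)+1) := by
        intro k _; push_cast; ring_nf
      rw [Finset.sum_congr rfl cast1]
      linarith [lhs2]
    rw [expand, key, neg_zero]

/-- `g x k = x (x+k)^(k-1)`, with `g x 0 = 1`. -/
noncomputable def g (x : ℚ) : ℕ → ℚ
  | 0 => 1
  | k + 1 => x * (x + (k + 1)) ^ k

lemma choose_arith (n k : ℕ) : (n + 1 - k) * (n+1).choose k = (n+1) * n.choose k := by
  rw [Nat.mul_comm, ← Nat.choose_succ_right_eq, ← Nat.add_one_mul_choose_eq]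

lemma g_mul_pow (x : ℚ) (k n : ℕ) (hk : k ≤ n + 1) :
    g x k * (x + k) ^ (n + 1 - k) = x * (x + k) ^ n := by
  cases k with
  | zero => simp [g, pow_succ, mul_comm]
  | succ k =>
    show x * (x + (k+1)) ^ k * (x + ((k+1:ℕ):ℚ)) ^ (n + 1 - (k+1)) = _
    push_cast
    rw [mul_assoc, ← pow_add]
    congr 2
    omega

lemma abel_poly : ∀ (n : ℕ) (x : ℚ),
    (∑ k ∈ range (n + 1), C ((n.choose k : ℚ) * g x k) * (X + C (((n - k : ℕ) : ℚ))) ^ (n - k))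
      = (X + C (x + n)) ^ n := by
  intro n
  induction n with
  | zero => intro x; simp [g]
  | succ n ih =>
    intro x
    set p : Polynomial ℚ := ∑ k ∈ range (n + 2),
      C (((n+1).choose k : ℚ) * g x k) * (X + C (((n + 1 - k : ℕ) : ℚ))) ^ (n + 1 - k) with hp
    set q : Polynomial ℚ := (X + C (x + ((n:ℚ)+1))) ^ (n+1) with hq
    have e1 : derivative p = C ((n:ℚ)+1) * ∑ k ∈ range (n + 1),
        C ((n.choose k : ℚ) * g x k) * (X + C (((n - k : ℕ) : ℚ) + 1)) ^ (n - k) := by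
      rw [hp, derivative_sum, Finset.sum_range_succ]
      have topzero : derivative (C (((n+1).choose (n+1) : ℚ) * g x (n+1))
          * (X + C (((n + 1 - (n+1) : ℕ) : ℚ))) ^ (n + 1 - (n+1))) = 0 := by
        simp
      rw [topzero, add_zero, Finset.mul_sum]
      refine Finset.sum_congr rfl fun k hk => ?_
      have hk' : k ≤ n := Nat.lt_succ_iff.mp (mem_range.mp hk)
      have hsub : n + 1 - k = (n - k) + 1 := by omega
      rw [derivative_C_mul, derivative_pow, derivative_add, derivative_X, derivative_C,
        add_zero, mul_one, hsub, Nat.add_sub_cancel,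
        show ((n - k + 1 : ℕ) : ℚ) = ((n - k : ℕ) : ℚ) + 1 by push_cast; ring]
      have harith : (((n+1).choose k : ℚ)) * (((n - k : ℕ) : ℚ) + 1)
          = ((n:ℚ)+1) * (n.choose k : ℚ) := by
        have h3 := choose_arith n k
        rw [hsub] at h3
        rw [mul_comm, show ((n - k : ℕ) : ℚ) + 1 = ((n - k + 1 : ℕ) : ℚ) from by push_cast; ring]
        exact_mod_cast h3
      calc C (((n+1).choose k : ℚ) * g x k) * (C (((n - k : ℕ) : ℚ) + 1)
            * (X + C (((n - k : ℕ) : ℚ) + 1)) ^ (n - k))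
          = C ((((n+1).choose k : ℚ)) * (((n - k : ℕ) : ℚ) + 1)) * C (g x k)
            * (X + C (((n - k : ℕ) : ℚ) + 1)) ^ (n - k) := by
            simp only [map_mul, map_add, map_one]; ring
        _ = _ := by rw [harith]; simp only [map_mul, map_add, map_one]; ring
    have e2 : (∑ k ∈ range (n + 1),
        C ((n.choose k : ℚ) * g x k) * (X + C (((n - k : ℕ) : ℚ) + 1)) ^ (n - k))
        = (X + C (x + (n:ℚ) + 1)) ^ n := by
      have h1 : (∑ k ∈ range (n + 1), C ((n.choose k : ℚ) * g x k)
          * (X + C (((n - k : ℕ) : ℚ))) ^ (n - k)).comp (X + 1)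
          = (X + 1 + C (x + (n:ℚ))) ^ n := by
        rw [ih x, pow_comp, add_comp, X_comp, C_comp]
      rw [Polynomial.sum_comp] at h1
      have h2 : ∀ k ∈ range (n+1), (C ((n.choose k : ℚ) * g x k)
          * (X + C (((n - k : ℕ) : ℚ))) ^ (n - k)).comp (X + 1)
          = C ((n.choose k : ℚ) * g x k) * (X + C (((n - k : ℕ) : ℚ) + 1)) ^ (n - k) := by
        intro k _
        simp only [mul_comp, pow_comp, add_comp, X_comp, C_comp, map_add, map_one]
        ring
      rw [Finset.sum_congr rfl h2] at h1
      rw [h1]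
      congr 1
      simp only [map_add, map_one]
      ring
    have e3 : derivative q = C ((n:ℚ)+1) * (X + C (x + (n:ℚ) + 1)) ^ n := by
      rw [hq, derivative_pow, Nat.add_sub_cancel, derivative_add, derivative_X, derivative_C,
        add_zero, mul_one]
      simp only [Nat.cast_add, Nat.cast_one]
      ring
    have hderiv : derivative (p - q) = 0 := by
      rw [derivative_sub, e1, e2, e3, sub_self]
    have hconst := eq_C_of_derivative_eq_zero hderiv
    set y₀ : ℚ := -(x + ((n:ℚ)+1)) with hy₀
    have heval_q : q.eval y₀ = 0 := by
      have hz : y₀ + (x + ((n:ℚ)+1)) = 0 := by rw [hy₀]; ring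
      rw [hq, eval_pow, eval_add, eval_X, eval_C, hz]
      exact zero_pow (Nat.succ_ne_zero n)
    have heval_p : p.eval y₀ = 0 := by
      rw [hp]
      simp only [eval_finset_sum, eval_mul, eval_pow, eval_add, eval_X, eval_C]
      have term_eq : ∀ k ∈ range (n + 2),
          (((n+1).choose k : ℚ) * g x k) * (y₀ + ((n + 1 - k : ℕ) : ℚ)) ^ (n + 1 - k)
          = ((-1:ℚ)^(n+1) * x) * ((-1 : ℚ) ^ k * ((n+1).choose k : ℚ)
              * (((X : Polynomial ℚ) + C x) ^ n).eval (k : ℚ)) := by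
        intro k hk
        have hk' : k ≤ n + 1 := Nat.lt_succ_iff.mp (mem_range.mp hk)
        have hbase : y₀ + ((n + 1 - k : ℕ) : ℚ) = -(x + k) := by
          rw [Nat.cast_sub hk', hy₀]
          push_cast
          ring
        rw [hbase, neg_pow]
        have hsign : (-1 : ℚ) ^ (n + 1 - k) = (-1:ℚ)^(n+1) * (-1:ℚ)^k := by
          have : (-1 : ℚ) ^ (n + 1 - k) * (-1:ℚ)^k = (-1:ℚ)^(n+1) := by
            rw [← pow_add]
            congr 1
            omega
          have h2 : ((-1:ℚ)^k) * ((-1:ℚ)^k) = 1 := by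
            rw [← pow_add, Even.neg_one_pow ⟨k, rfl⟩]
          calc (-1 : ℚ) ^ (n + 1 - k) = (-1 : ℚ) ^ (n + 1 - k) * (((-1:ℚ)^k) * ((-1:ℚ)^k)) := by
                rw [h2, mul_one]
            _ = (-1:ℚ)^(n+1) * (-1:ℚ)^k := by rw [← mul_assoc, this]
        rw [eval_pow, eval_add, eval_X, eval_C]
        have := g_mul_pow x k n hk'
        calc (((n+1).choose k : ℚ) * g x k) * ((-1:ℚ)^(n+1-k) * (x + k) ^ (n+1-k))
            = ((n+1).choose k : ℚ) * (-1:ℚ)^(n+1-k) * (g x k * (x + k) ^ (n+1-k)) := by ring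
          _ = ((n+1).choose k : ℚ) * ((-1:ℚ)^(n+1) * (-1:ℚ)^k) * (x * (x + k) ^ n) := by
              rw [hsign, this]
          _ = _ := by rw [show ((k:ℚ) + x) ^ n = (x + k) ^ n by ring_nf]; ring
      rw [Finset.sum_congr rfl term_eq, ← Finset.mul_sum]
      have hdeg : (((X : Polynomial ℚ) + C x) ^ n).degree < ((n+1 : ℕ) : WithBot ℕ) := by
        have h1 : (((X : Polynomial ℚ) + C x) ^ n).degree ≤ (n : WithBot ℕ) := by
          refine le_trans (degree_pow_le _ _) ?_
          rw [degree_X_add_C]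
          simp
        exact lt_of_le_of_lt h1 (by exact_mod_cast WithBot.coe_lt_coe.mpr (Nat.lt_succ_self n))
      rw [fd (n+1) _ hdeg, mul_zero]
    have : p - q = 0 := by
      have hc0 := congrArg (Polynomial.eval y₀) hconst
      rw [eval_sub, heval_p, heval_q, sub_zero, eval_C] at hc0
      rw [hconst, ← hc0]
      simp
    rw [show ((n+1 : ℕ) : ℚ) = (n:ℚ)+1 from by push_cast; ring]
    exact sub_eq_zero.mp this

lemma abel_sum (n : ℕ) (x y : ℚ) :
    ∑ k ∈ range (n+1), (n.choose k : ℚ) * g x k * (y + ((n - k : ℕ) : ℚ)) ^ (n - k)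
      = (x + y + n) ^ n := by
  have h := congrArg (Polynomial.eval y) (abel_poly n x)
  simp only [Polynomial.eval_finset_sum, Polynomial.eval_mul, Polynomial.eval_pow,
    Polynomial.eval_add, Polynomial.eval_X, Polynomial.eval_C] at h
  rw [show (x + y + (n:ℚ)) ^ n = (y + (x + (n:ℚ))) ^ n from by ring_nf]
  exact h

end AbelIdentity

open PowerSeries

/-- Formal composition `f ∘ g` of power series over `ℚ` (the correct substitution of `g`
into `f` whenever `g` has zero constant coefficient): the coefficient of `X^n` only
involves `Σ_{m ≤ n} (coeff m f) · g^m`, since `g^m` has order at least `m`. -/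
noncomputable def psComp (f g : PowerSeries ℚ) : PowerSeries ℚ :=
  PowerSeries.mk fun n =>
    PowerSeries.coeff n
      (∑ m ∈ Finset.range (n + 1), PowerSeries.C (PowerSeries.coeff m f) * g ^ m)

open Finset

lemma coeff_psComp (f g : PowerSeries ℚ) (n : ℕ) :
    coeff n (psComp f g) = ∑ m ∈ range (n + 1), coeff m f * coeff n (g ^ m) := by
  simp [psComp, coeff_mk]

lemma coeff_of_X_pow_dvd {h : PowerSeries ℚ} {m n : ℕ} (hd : (X : PowerSeries ℚ) ^ m ∣ h)
    (hn : n < m) : coeff n h = 0 := by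
  obtain ⟨u, rfl⟩ := hd
  rw [coeff_X_pow_mul']
  simp [Nat.not_le_of_lt hn]

lemma X_pow_dvd_pow {g : PowerSeries ℚ} (hg : constantCoeff g = 0) (m : ℕ) :
    (X : PowerSeries ℚ) ^ m ∣ g ^ m :=
  pow_dvd_pow_of_dvd (X_dvd_iff.mpr hg) m

lemma coeff_pow_eq_zero {g : PowerSeries ℚ} (hg : constantCoeff g = 0) {n m : ℕ}
    (h : n < m) : coeff n (g ^ m) = 0 :=
  coeff_of_X_pow_dvd (X_pow_dvd_pow hg m) h

/-- Truncation stability. -/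
lemma coeff_psComp_stab (f g : PowerSeries ℚ) (hg : constantCoeff g = 0) {n N : ℕ}
    (h : n ≤ N) :
    coeff n (psComp f g)
      = coeff n (∑ m ∈ range (N + 1), C (coeff m f) * g ^ m) := by
  rw [coeff_psComp, map_sum]
  simp only [coeff_C_mul]
  refine Finset.sum_subset (by intro m hm; simp only [mem_range] at *; omega) ?_
  intro m hm hm2
  simp only [mem_range] at hm hm2
  have : n < m := by omega
  rw [coeff_pow_eq_zero hg this, mul_zero]

lemma coeff_mul_congr_right {A A' B : PowerSeries ℚ} {n : ℕ}
    (h : ∀ j ≤ n, coeff j A = coeff j A') :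
    coeff n (B * A) = coeff n (B * A') := by
  rw [coeff_mul, coeff_mul]
  refine Finset.sum_congr rfl fun ij hij => ?_
  rw [h ij.2 (by have := Finset.HasAntidiagonal.mem_antidiagonal.mp hij; omega)]

lemma coeff_mul_congr_right' {A A' B : PowerSeries ℚ} (hB : constantCoeff B = 0) {n : ℕ}
    (h : ∀ j < n, coeff j A = coeff j A') :
    coeff n (B * A) = coeff n (B * A') := by
  rw [coeff_mul, coeff_mul]
  refine Finset.sum_congr rfl fun ij hij => ?_
  have hij' := Finset.HasAntidiagonal.mem_antidiagonal.mp hij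
  rcases Nat.eq_zero_or_pos ij.1 with h1 | h1
  · rw [h1, coeff_zero_eq_constantCoeff, hB, zero_mul, zero_mul]
  · rw [h ij.2 (by omega)]

lemma psComp_neg_left (f g : PowerSeries ℚ) : psComp (-f) g = -psComp f g := by
  ext n
  simp [coeff_psComp]

lemma psComp_rescale_left (a : ℚ) (f g : PowerSeries ℚ) :
    psComp (rescale a f) g = psComp f (C a * g) := by
  ext n
  rw [coeff_psComp, coeff_psComp]
  refine Finset.sum_congr rfl fun m _ => ?_
  rw [coeff_rescale, mul_pow, ← map_pow, coeff_C_mul]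
  ring

lemma psComp_rescale_right (a : ℚ) (f g : PowerSeries ℚ) :
    rescale a (psComp f g) = psComp f (rescale a g) := by
  ext n
  rw [coeff_rescale, coeff_psComp, coeff_psComp, Finset.mul_sum]
  refine Finset.sum_congr rfl fun m _ => ?_
  rw [← map_pow, coeff_rescale]
  ring

lemma psComp_X_mul (f g : PowerSeries ℚ) (hg : constantCoeff g = 0) :
    psComp (X * f) g = g * psComp f g := by
  ext n
  rw [coeff_psComp]
  cases n with
  | zero =>
    simp only [range_one, sum_singleton, pow_zero, coeff_zero_eq_constantCoeff]
    simp [hg]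
  | succ n =>
    rw [Finset.sum_range_succ']
    have h0 : coeff 0 (X * f) * coeff (n+1) (g ^ 0) = 0 := by
      simp [coeff_zero_eq_constantCoeff]
    rw [h0, add_zero]
    have hterm : ∀ k, coeff (k+1) (X * f) * coeff (n+1) (g ^ (k+1))
        = coeff k f * coeff (n+1) (g * g ^ k) := by
      intro k
      rw [coeff_succ_X_mul, pow_succ']
    simp only [hterm]
    have hsum : ∑ k ∈ range (n+1), coeff k f * coeff (n+1) (g * g ^ k)
        = coeff (n+1) (g * ∑ k ∈ range (n+1), C (coeff k f) * g ^ k) := by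
      rw [Finset.mul_sum, map_sum]
      refine Finset.sum_congr rfl fun k _ => ?_
      rw [show g * (C (coeff k f) * g ^ k) = C (coeff k f) * (g * g ^ k) by ring,
        coeff_C_mul]
    rw [hsum]
    exact coeff_mul_congr_right' hg fun j hj =>
      (coeff_psComp_stab f g hg (by omega)).symm

lemma psComp_exp_zero : psComp (exp ℚ) 0 = 1 := by
  ext n
  rw [coeff_psComp]
  cases n with
  | zero => simp [coeff_exp]
  | succ n =>
    rw [Finset.sum_range_succ']
    have : ∀ k ∈ range (n+1), coeff (k+1) (exp ℚ) * coeff (n+1) ((0:PowerSeries ℚ) ^ (k+1)) = 0 := by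
      intro k _
      simp [zero_pow]
    rw [Finset.sum_congr rfl this, Finset.sum_const, smul_zero, zero_add]
    simp [coeff_one]

lemma sum_antidiag_box (n : ℕ) (φ : ℕ × ℕ → ℚ) (hφ : ∀ p : ℕ × ℕ, n < p.1 + p.2 → φ p = 0) :
    ∑ m ∈ range (n+1), ∑ p ∈ Finset.HasAntidiagonal.antidiagonal m, φ p
      = ∑ p ∈ range (n+1) ×ˢ range (n+1), φ p := by
  have hdisj : (↑(range (n+1)) : Set ℕ).PairwiseDisjoint Finset.HasAntidiagonal.antidiagonal := by
    intro a _ b _ hab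
    refine Finset.disjoint_left.mpr fun p hpa hpb => ?_
    exact hab ((Finset.HasAntidiagonal.mem_antidiagonal.mp hpa).symm.trans (Finset.HasAntidiagonal.mem_antidiagonal.mp hpb))
  rw [← Finset.sum_biUnion hdisj]
  refine Finset.sum_subset ?_ ?_
  · intro p hp
    simp only [Finset.mem_biUnion, mem_range] at hp
    obtain ⟨m, hm, hpm⟩ := hp
    have := Finset.HasAntidiagonal.mem_antidiagonal.mp hpm
    simp only [Finset.mem_product, mem_range]
    omega
  · intro p _ hp
    refine hφ p ?_
    by_contra hle
    push_neg at hle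
    exact hp (Finset.mem_biUnion.mpr ⟨p.1 + p.2, mem_range.mpr (by omega),
      Finset.HasAntidiagonal.mem_antidiagonal.mpr rfl⟩)

lemma coeff_exp' (n : ℕ) : coeff n (exp ℚ) = 1 / n.factorial := by
  simp [PowerSeries.coeff_exp]

lemma psComp_exp_mul {f g : PowerSeries ℚ} (hf : constantCoeff f = 0)
    (hg : constantCoeff g = 0) :
    psComp (exp ℚ) f * psComp (exp ℚ) g = psComp (exp ℚ) (f + g) := by
  ext n
  have hfg : constantCoeff (f + g) = 0 := by rw [map_add, hf, hg, add_zero]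
  set F : PowerSeries ℚ := ∑ a ∈ range (n+1), C (coeff a (exp ℚ)) * f ^ a with hF
  set G : PowerSeries ℚ := ∑ b ∈ range (n+1), C (coeff b (exp ℚ)) * g ^ b with hG
  have step1 : coeff n (psComp (exp ℚ) f * psComp (exp ℚ) g) = coeff n (F * G) := by
    rw [coeff_mul, coeff_mul]
    refine Finset.sum_congr rfl fun ij hij => ?_
    have hij' := Finset.HasAntidiagonal.mem_antidiagonal.mp hij
    rw [coeff_psComp_stab (exp ℚ) f hf (show ij.1 ≤ n by omega),
      coeff_psComp_stab (exp ℚ) g hg (show ij.2 ≤ n by omega)]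
  have step2 : coeff n (F * G)
      = ∑ p ∈ range (n+1) ×ˢ range (n+1),
          (coeff p.1 (exp ℚ) * coeff p.2 (exp ℚ)) * coeff n (f ^ p.1 * g ^ p.2) := by
    rw [hF, hG, Finset.sum_mul_sum, ← Finset.sum_product']
    rw [map_sum]
    refine Finset.sum_congr rfl fun p _ => ?_
    rw [show C (coeff p.1 (exp ℚ)) * f ^ p.1 * (C (coeff p.2 (exp ℚ)) * g ^ p.2)
      = C (coeff p.1 (exp ℚ)) * (C (coeff p.2 (exp ℚ)) * (f ^ p.1 * g ^ p.2)) by ring,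
      coeff_C_mul, coeff_C_mul]
    ring
  have step3 : coeff n (psComp (exp ℚ) (f + g))
      = ∑ m ∈ range (n+1), ∑ p ∈ Finset.HasAntidiagonal.antidiagonal m,
          (coeff p.1 (exp ℚ) * coeff p.2 (exp ℚ)) * coeff n (f ^ p.1 * g ^ p.2) := by
    rw [coeff_psComp]
    refine Finset.sum_congr rfl fun m hm => ?_
    rw [add_pow]
    rw [map_sum, Finset.mul_sum]
    rw [Finset.Nat.sum_antidiagonal_eq_sum_range_succ
      (fun a b => (coeff a (exp ℚ) * coeff b (exp ℚ)) * coeff n (f ^ a * g ^ b)) m]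
    refine Finset.sum_congr rfl fun c hc => ?_
    have hc' : c ≤ m := by simp only [mem_range] at hc; omega
    have hcoeff : coeff n (f ^ c * g ^ (m - c) * (m.choose c : PowerSeries ℚ))
        = (m.choose c : ℚ) * coeff n (f ^ c * g ^ (m - c)) := by
      rw [mul_comm (f ^ c * g ^ (m-c)) _, show ((m.choose c : ℕ) : PowerSeries ℚ)
        = C ((m.choose c : ℕ) : ℚ) by simp [map_natCast], coeff_C_mul]
    rw [hcoeff]
    have harith : coeff m (exp ℚ) * (m.choose c : ℚ)
        = coeff c (exp ℚ) * coeff (m - c) (exp ℚ) := by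
      rw [coeff_exp', coeff_exp', coeff_exp', Nat.cast_choose ℚ hc']
      have h1 : (m.factorial : ℚ) ≠ 0 := Nat.cast_ne_zero.mpr (Nat.factorial_ne_zero m)
      have h2 : (c.factorial : ℚ) ≠ 0 := Nat.cast_ne_zero.mpr (Nat.factorial_ne_zero c)
      have h3 : ((m - c).factorial : ℚ) ≠ 0 := Nat.cast_ne_zero.mpr (Nat.factorial_ne_zero _)
      field_simp
    rw [← mul_assoc, harith]
  rw [step1, step2, step3, sum_antidiag_box]
  intro p hp
  have : coeff n (f ^ p.1 * g ^ p.2) = 0 := by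
    refine coeff_of_X_pow_dvd (m := p.1 + p.2) ?_ hp
    rw [pow_add]
    exact mul_dvd_mul (X_pow_dvd_pow hf p.1) (X_pow_dvd_pow hg p.2)
  rw [this, mul_zero]

noncomputable def bS (x : ℚ) : PowerSeries ℚ :=
  PowerSeries.mk fun k => g x k / k.factorial

noncomputable def cS (y : ℚ) : PowerSeries ℚ :=
  PowerSeries.mk fun n => (y + n) ^ n / n.factorial

lemma coeff_bS (x : ℚ) (k : ℕ) : coeff k (bS x) = g x k / k.factorial := coeff_mk _ _

lemma coeff_cS (y : ℚ) (n : ℕ) : coeff n (cS y) = (y + n) ^ n / n.factorial := coeff_mk _ _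

lemma bc (x y : ℚ) : bS x * cS y = cS (x + y) := by
  ext n
  rw [coeff_mul, coeff_cS]
  rw [Finset.Nat.sum_antidiagonal_eq_sum_range_succ
    (fun a b => coeff a (bS x) * coeff b (cS y)) n]
  have h1 : (n.factorial : ℚ) ≠ 0 := Nat.cast_ne_zero.mpr (Nat.factorial_ne_zero n)
  rw [eq_div_iff h1, Finset.sum_mul]
  rw [show (x + y + (n:ℚ)) ^ n = ∑ k ∈ range (n+1),
    (n.choose k : ℚ) * g x k * (y + ((n - k : ℕ) : ℚ)) ^ (n - k) from (abel_sum n x y).symm]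
  refine Finset.sum_congr rfl fun k hk => ?_
  have hk' : k ≤ n := by simp only [mem_range] at hk; omega
  rw [coeff_bS, coeff_cS, Nat.cast_choose ℚ hk']
  have h2 : (k.factorial : ℚ) ≠ 0 := Nat.cast_ne_zero.mpr (Nat.factorial_ne_zero k)
  have h3 : ((n - k).factorial : ℚ) ≠ 0 := Nat.cast_ne_zero.mpr (Nat.factorial_ne_zero _)
  field_simp

lemma cS_zero_ne : cS 0 ≠ 0 := by
  intro h
  have := congrArg (coeff 0) h
  rw [coeff_cS] at this
  simp at this

lemma bb (x y : ℚ) : bS x * bS y = bS (x + y) := by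
  have h : (bS x * bS y) * cS 0 = bS (x + y) * cS 0 := by
    rw [mul_assoc, bc y 0, add_zero, bc x y, bc (x+y) 0, add_zero]
  exact mul_right_cancel₀ cS_zero_ne h

lemma cb (y : ℚ) : cS y = bS y + X * cS (y + 1) := by
  ext n
  cases n with
  | zero =>
    rw [map_add, coeff_cS, coeff_bS]
    simp [g, coeff_zero_eq_constantCoeff]
  | succ n =>
    rw [map_add, coeff_cS, coeff_bS, coeff_succ_X_mul, coeff_cS]
    show (y + ((n+1 : ℕ) : ℚ)) ^ (n+1) / (n+1).factorial
      = y * (y + ((n:ℚ) + 1)) ^ n / (n+1).factorial + (y + 1 + (n:ℚ)) ^ n / n.factorial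
    have h1 : ((n+1).factorial : ℚ) ≠ 0 := Nat.cast_ne_zero.mpr (Nat.factorial_ne_zero _)
    have h2 : (n.factorial : ℚ) ≠ 0 := Nat.cast_ne_zero.mpr (Nat.factorial_ne_zero _)
    have hfac : ((n+1).factorial : ℚ) = ((n:ℚ)+1) * n.factorial := by
      rw [Nat.factorial_succ]; push_cast; ring
    have hpow : (y + ((n+1 : ℕ) : ℚ)) ^ (n+1)
        = y * (y + ((n:ℚ)+1)) ^ n + ((n:ℚ)+1) * (y + ((n:ℚ)+1)) ^ n := by
      push_cast
      rw [pow_succ]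
      ring
    rw [hpow]
    have hbase : (y + 1 + (n:ℚ)) = (y + ((n:ℚ)+1)) := by ring
    rw [hbase, hfac]
    field_simp

section Main
variable (T : PowerSeries ℚ)

lemma fact_ne (n : ℕ) : (n.factorial : ℚ) ≠ 0 := Nat.cast_ne_zero.mpr (Nat.factorial_ne_zero n)

lemma Tb (h0 : PowerSeries.constantCoeff T = 0)
    (hT : ∀ n : ℕ, 1 ≤ n →
      PowerSeries.coeff n T = (n : ℚ) ^ (n - 1) / (n.factorial : ℚ)) :
    T = X * bS 1 := by
  ext n
  cases n with
  | zero =>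
    rw [coeff_zero_eq_constantCoeff, h0, map_mul, constantCoeff_X, zero_mul]
  | succ n =>
    rw [hT (n+1) (by omega), coeff_succ_X_mul, coeff_bS]
    cases n with
    | zero => simp [g]
    | succ k =>
      show ((k+2 : ℕ) : ℚ) ^ (k + 2 - 1) / (k+2).factorial
        = 1 * (1 + ((k:ℚ) + 1)) ^ k / (k+1).factorial
      have h1 : (k + 2 - 1 : ℕ) = k + 1 := by omega
      rw [h1, one_mul]
      have h2 : (1 + ((k:ℚ) + 1)) = ((k+2 : ℕ) : ℚ) := by push_cast; ring
      rw [h2]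
      have h3 : ((k+2).factorial : ℚ) = ((k+2:ℕ) : ℚ) * (k+1).factorial := by
        rw [show k+2 = (k+1)+1 from rfl, Nat.factorial_succ]
        push_cast; ring
      rw [h3, pow_succ]
      have h4 := fact_ne (k+1)
      have h5 : ((k+2:ℕ) : ℚ) ≠ 0 := by push_cast; positivity
      field_simp

lemma bS1_deriv : d⁄dX ℚ (bS 1) = cS 2 := by
  ext n
  rw [coeff_derivative, coeff_bS, coeff_cS]
  show g 1 (n+1) / (n+1).factorial * ((n:ℚ)+1) = (2 + (n:ℚ)) ^ n / n.factorial
  have h1 : g 1 (n+1) = (2 + (n:ℚ)) ^ n := by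
    show (1:ℚ) * (1 + ((n:ℚ) + 1)) ^ n = _
    rw [one_mul]; ring_nf
  rw [h1, Nat.factorial_succ]
  have h2 := fact_ne n
  have h3 : ((n:ℚ) + 1) ≠ 0 := by positivity
  push_cast
  field_simp

lemma T_deriv (h0 : PowerSeries.constantCoeff T = 0)
    (hT : ∀ n : ℕ, 1 ≤ n →
      PowerSeries.coeff n T = (n : ℚ) ^ (n - 1) / (n.factorial : ℚ)) :
    d⁄dX ℚ T = bS 1 + X * cS 2 := by
  rw [Tb T h0 hT, Derivation.leibniz, derivative_X, bS1_deriv, smul_eq_mul, smul_eq_mul,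
    mul_one]
  ring

lemma ode_b (h0 : PowerSeries.constantCoeff T = 0)
    (hT : ∀ n : ℕ, 1 ≤ n →
      PowerSeries.coeff n T = (n : ℚ) ^ (n - 1) / (n.factorial : ℚ)) :
    d⁄dX ℚ (bS 1) = d⁄dX ℚ T * bS 1 := by
  rw [bS1_deriv, T_deriv T h0 hT]
  calc cS 2 = bS 2 + X * cS 3 := by
        have := cb 2
        norm_num at this ⊢
        convert this using 3 <;> norm_num
    _ = (bS 1 + X * cS 2) * bS 1 := by
        rw [show (bS 1 + X * cS 2) * bS 1 = bS 1 * bS 1 + X * (bS 1 * cS 2) by ring,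
          bb, bc]
        norm_num

lemma ode_E (h0 : PowerSeries.constantCoeff T = 0) (n : ℕ) :
    coeff (n+1) (psComp (exp ℚ) T) * ((n:ℚ)+1)
      = coeff n (d⁄dX ℚ T * psComp (exp ℚ) T) := by
  rw [coeff_psComp_stab (exp ℚ) T h0 (le_refl (n+1)), map_sum, Finset.sum_mul]
  have hterm : ∀ m : ℕ, coeff (n+1) (C (coeff m (exp ℚ)) * T ^ m) * ((n:ℚ)+1)
      = coeff m (exp ℚ) * ((m:ℚ) * coeff n (T ^ (m-1) * d⁄dX ℚ T)) := by
    intro m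
    rw [coeff_C_mul]
    have hder : coeff (n+1) (T ^ m) * ((n:ℚ)+1) = coeff n (d⁄dX ℚ (T ^ m)) := by
      rw [coeff_derivative]
    calc coeff m (exp ℚ) * coeff (n+1) (T ^ m) * ((n:ℚ)+1)
        = coeff m (exp ℚ) * (coeff (n+1) (T ^ m) * ((n:ℚ)+1)) := by ring
      _ = coeff m (exp ℚ) * coeff n (d⁄dX ℚ (T ^ m)) := by rw [hder]
      _ = _ := by
          simp only [Derivation.leibniz_pow, smul_eq_mul, nsmul_eq_mul]
          rw [show ((m:ℕ) : ℚ⟦X⟧) = C ((m:ℕ):ℚ) by simp [map_natCast], coeff_C_mul]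
  rw [Finset.sum_congr rfl (fun m _ => hterm m), Finset.sum_range_succ']
  have h00 : coeff 0 (exp ℚ) * (((0:ℕ):ℚ) * coeff n (T ^ (0-1) * d⁄dX ℚ T)) = 0 := by
    simp
  rw [h00, add_zero]
  have hterm2 : ∀ k ∈ range (n+1),
      coeff (k+1) (exp ℚ) * ((((k+1:ℕ)):ℚ) * coeff n (T ^ (k+1-1) * d⁄dX ℚ T))
      = coeff n (d⁄dX ℚ T * (C (coeff k (exp ℚ)) * T ^ k)) := by
    intro k _
    rw [show (k+1-1 : ℕ) = k from rfl, coeff_exp', coeff_exp',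
      show d⁄dX ℚ T * (C ((1:ℚ) / k.factorial) * T ^ k)
        = C ((1:ℚ) / k.factorial) * (T ^ k * d⁄dX ℚ T) by ring, coeff_C_mul]
    rw [Nat.factorial_succ]
    have h2 := fact_ne k
    have h3 : ((k:ℚ) + 1) ≠ 0 := by positivity
    push_cast
    field_simp
  rw [Finset.sum_congr rfl hterm2, ← map_sum, ← Finset.mul_sum]
  exact coeff_mul_congr_right fun j hj => (coeff_psComp_stab (exp ℚ) T h0 hj).symm

lemma E_eq_b1 (h0 : PowerSeries.constantCoeff T = 0)
    (hT : ∀ n : ℕ, 1 ≤ n →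
      PowerSeries.coeff n T = (n : ℚ) ^ (n - 1) / (n.factorial : ℚ)) :
    psComp (exp ℚ) T = bS 1 := by
  ext n
  induction n using Nat.strong_induction_on with
  | _ n ih =>
    cases n with
    | zero =>
      rw [coeff_psComp, coeff_bS]
      simp [coeff_exp', g]
    | succ n =>
      have h1 := ode_E T h0 n
      have h2 : coeff n (d⁄dX ℚ T * psComp (exp ℚ) T) = coeff n (d⁄dX ℚ T * bS 1) :=
        coeff_mul_congr_right fun j hj => ih j (by omega)
      have h3 : coeff n (d⁄dX ℚ T * bS 1) = coeff (n+1) (bS 1) * ((n:ℚ)+1) := by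
        have := congrArg (coeff n) (ode_b T h0 hT)
        rw [coeff_derivative] at this
        rw [← this]
    
      have h4 : coeff (n+1) (psComp (exp ℚ) T) * ((n:ℚ)+1)
          = coeff (n+1) (bS 1) * ((n:ℚ)+1) := by rw [h1, h2, h3]
      have h5 : ((n:ℚ)+1) ≠ 0 := by positivity
      exact mul_right_cancel₀ h5 h4

lemma rescale_negOne_X : rescale (-1 : ℚ) X = -X := by
  ext n
  rw [coeff_rescale, map_neg]
  by_cases h : n = 1
  · simp [h, coeff_X]
  · simp [coeff_X, h]

lemma constantCoeff_rescale' (a : ℚ) (f : PowerSeries ℚ) :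
    constantCoeff (rescale a f) = constantCoeff f := by
  have h := coeff_rescale f a 0
  rw [pow_zero, one_mul, coeff_zero_eq_constantCoeff_apply, coeff_zero_eq_constantCoeff_apply] at h
  exact h

theorem tree_series_functional_equation' (T : PowerSeries ℚ)
    (h0 : PowerSeries.constantCoeff T = 0)
    (hT : ∀ n : ℕ, 1 ≤ n →
      PowerSeries.coeff n T = (n : ℚ) ^ (n - 1) / (n.factorial : ℚ)) :
    T = PowerSeries.X * psComp (PowerSeries.exp ℚ) T ∧
    psComp (PowerSeries.rescale (-1) T)
        (-(PowerSeries.X * PowerSeries.rescale (-1) (PowerSeries.exp ℚ))) =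
      PowerSeries.X ∧
    psComp (-(PowerSeries.X * PowerSeries.rescale (-1) (PowerSeries.exp ℚ)))
        (PowerSeries.rescale (-1) T) =
      PowerSeries.X := by
  have part1 : T = PowerSeries.X * psComp (PowerSeries.exp ℚ) T := by
    rw [E_eq_b1 T h0 hT]; exact Tb T h0 hT
  refine ⟨part1, ?_, ?_⟩
  -- Part 2 : `T(-X) ∘ (-X exp(-X)) = X`
  · rw [psComp_rescale_left]
    have hw : C (-1) * (-(X * rescale (-1) (exp ℚ))) = X * rescale (-1) (exp ℚ) := by
      rw [map_neg, map_one]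
      ring
    rw [hw]
    ext n
    rw [coeff_psComp]
    have hterm : ∀ m ∈ range (n+1), coeff m T * coeff n ((X * rescale (-1) (exp ℚ)) ^ m)
        = coeff m T * ((-(m:ℚ)) ^ (n - m) / (n-m).factorial) := by
      intro m hm
      have hm' : m ≤ n := by simp only [mem_range] at hm; omega
      congr 1
      rw [mul_pow, ← map_pow, exp_pow_eq_rescale_exp, rescale_rescale, coeff_X_pow_mul',
        if_pos hm', coeff_rescale, coeff_exp']
      push_cast
      ring
    rw [Finset.sum_congr rfl hterm]
    rcases Nat.lt_or_ge n 2 with hn | hn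
    · interval_cases n
      · simp [coeff_zero_eq_constantCoeff, h0, coeff_X]
      · rw [coeff_X, if_pos rfl]
        rw [Finset.sum_range_succ, Finset.sum_range_one]
        rw [coeff_zero_eq_constantCoeff, h0, hT 1 le_rfl]
        norm_num
    · rw [coeff_X, if_neg (by omega)]
      have key := fd n (Polynomial.X ^ (n-1)) (by
        rw [Polynomial.degree_X_pow]
        exact_mod_cast WithBot.coe_lt_coe.mpr (by omega))
      have hterm2 : ∀ m ∈ range (n+1),
          coeff m T * ((-(m:ℚ)) ^ (n - m) / (n-m).factorial)
          = ((-1:ℚ)^n / n.factorial)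
              * ((-1:ℚ)^m * (n.choose m : ℚ) * ((Polynomial.X:Polynomial ℚ)^(n-1)).eval (m:ℚ)) := by
        intro m hm
        have hm' : m ≤ n := by simp only [mem_range] at hm; omega
        rw [Polynomial.eval_pow, Polynomial.eval_X]
        cases m with
        | zero =>
          rw [coeff_zero_eq_constantCoeff, h0]
          rw [show ((0:ℕ):ℚ) = 0 from rfl, zero_pow (show n - 1 ≠ 0 by omega)]
          ring
        | succ k =>
          rw [hT (k+1) (by omega)]
          have e1 : (-((k+1 : ℕ):ℚ)) ^ (n - (k+1)) = (-1:ℚ)^(n-(k+1)) * ((k+1:ℕ):ℚ)^(n-(k+1)) := by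
            rw [neg_pow]
          have e2 : ((k+1:ℕ):ℚ) ^ (k + 1 - 1) * ((k+1:ℕ):ℚ)^(n-(k+1)) = ((k+1:ℕ):ℚ)^(n-1) := by
            rw [← pow_add]
            congr 1
            omega
          have e3 : (-1:ℚ)^(n-(k+1)) = (-1:ℚ)^n * (-1:ℚ)^(k+1) := by
            have h4 : (-1:ℚ)^(n-(k+1)) * (-1:ℚ)^(k+1) = (-1:ℚ)^n := by
              rw [← pow_add]; congr 1; omega
            have h5 : (-1:ℚ)^(k+1) * (-1:ℚ)^(k+1) = 1 := by
              rw [← pow_add, Even.neg_one_pow ⟨k+1, rfl⟩]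
            calc (-1:ℚ)^(n-(k+1)) = (-1:ℚ)^(n-(k+1)) * ((-1:ℚ)^(k+1) * (-1:ℚ)^(k+1)) := by
                  rw [h5, mul_one]
              _ = _ := by rw [← mul_assoc, h4]
          have e4 : (n.choose (k+1) : ℚ)
              = (n.factorial : ℚ) / ((k+1).factorial * (n - (k+1)).factorial) :=
            Nat.cast_choose ℚ hm'
          rw [e1, e3, e4, ← e2]
          have f1 := fact_ne (k+1)
          have f2 := fact_ne (n - (k+1))
          have f3 := fact_ne n
          field_simp
      rw [Finset.sum_congr rfl hterm2, ← Finset.mul_sum, key, mul_zero]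
  -- Part 3 : `(-X exp(-X)) ∘ T(-X) = X`
  · set U : PowerSeries ℚ := rescale (-1) T with hU
    have hU0 : constantCoeff U = 0 := by rw [hU, constantCoeff_rescale', h0]
    have hU0' : constantCoeff (-U) = 0 := by rw [map_neg, hU0, neg_zero]
    have hUeq : U = -X * psComp (exp ℚ) U := by
      rw [hU]
      conv_lhs => rw [part1]
      rw [map_mul, rescale_negOne_X, psComp_rescale_right]
    rw [psComp_neg_left, psComp_X_mul _ _ hU0, psComp_rescale_left]
    have hCU : C (-1) * U = -U := by rw [map_neg, map_one]; ring
    rw [hCU]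
    nth_rewrite 1 [hUeq]
    rw [show -(-X * psComp (exp ℚ) U * psComp (exp ℚ) (-U))
        = X * (psComp (exp ℚ) U * psComp (exp ℚ) (-U)) from by ring,
      psComp_exp_mul hU0 hU0', add_neg_cancel, psComp_exp_zero, mul_one]

end Main

/-- The exponential generating function `T` of rooted labelled trees, with coefficients
`n^(n−1)/n!` for `n ≥ 1` and zero constant coefficient, satisfies the functional
equation `T = X · exp(T)`; equivalently, `T(−X)` is inverse to `−X·exp(−X)` under
composition. -/
theorem tree_series_functional_equation (T : PowerSeries ℚ)
    (h0 : PowerSeries.constantCoeff T = 0)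
    (hT : ∀ n : ℕ, 1 ≤ n →
      PowerSeries.coeff n T = (n : ℚ) ^ (n - 1) / (n.factorial : ℚ)) :
    T = PowerSeries.X * psComp (PowerSeries.exp ℚ) T ∧
    psComp (PowerSeries.rescale (-1) T)
        (-(PowerSeries.X * PowerSeries.rescale (-1) (PowerSeries.exp ℚ))) =
      PowerSeries.X ∧
    psComp (-(PowerSeries.X * PowerSeries.rescale (-1) (PowerSeries.exp ℚ)))
        (PowerSeries.rescale (-1) T) =
      PowerSeries.X :=
  tree_series_functional_equation' T h0 hT
end
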